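/- arXiv:1701.04364 — 7 statements merged into one kernel-verified Lean document; each statement's English description precedes it below -/
import Mathlib

section
/- Let X be a random variable on {0,1}^n with Shannon entropy H(X) ≥ n − Δ, and let ε > 0. Then there exist k+1 distributions μ_0, μ_1, ..., μ_k on {0,1}^n with k = O(n/ε), together with probabilities p_0, ..., p_k summing to 1, such that the distribution of X equals ∑_i p_i · μ_i, p_0 = O(ε), and for every i ≥ 1: (1) log₂|supp(μ_i)| ≥ n − Δ/ε − log(Θ(n/ε)), and (2) the total variation distance between μ_i and the uniform distribution on supp(μ_i) is O(ε). -/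
open Finset
open scoped Classical

/-- Shannon entropy (base 2) of a distribution on a finite type. -/
noncomputable def ent {Ω : Type*} [Fintype Ω] (p : Ω → ℝ) : ℝ :=
  - ∑ x, p x * Real.logb 2 (p x)

/-- Total variation distance between two distributions on a finite type. -/
noncomputable def tvDist {Ω : Type*} [Fintype Ω] (p q : Ω → ℝ) : ℝ :=
  (∑ x, |p x - q x|) / 2

private lemma telescope1 (d : ℕ → ℝ) (m : ℕ) :
    ∑ t ∈ Finset.range m, ((t : ℝ) + 1) * (d t - d (t+1))
      = (∑ t ∈ Finset.range m, d t) - m * d m := by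
  induction m with
  | zero => simp
  | succ m ih =>
    rw [Finset.sum_range_succ, Finset.sum_range_succ (f := d), ih]
    push_cast; ring

private lemma telescope2 (d : ℕ → ℝ) (j : ℕ) : ∀ m, j ≤ m →
    ∑ t ∈ Finset.range m, (if j ≤ t then d t - d (t+1) else 0) = d j - d m := by
  intro m
  induction m with
  | zero => intro h; interval_cases j; simp
  | succ m ih =>
    intro h
    rcases Nat.lt_or_ge j (m+1) with h1 | h1
    · have hj : j ≤ m := by omega
      rw [Finset.sum_range_succ, ih hj, if_pos hj]; ring
    · have hj : j = m + 1 := by omega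
      subst hj
      rw [Finset.sum_eq_zero, sub_self]
      intro t ht
      rw [if_neg]
      have := Finset.mem_range.mp ht
      omega

set_option maxHeartbeats 2000000 in
/-- Lemma 2.3: any distribution on {0,1}^n with entropy at least n - Δ decomposes into
a convex combination of O(n/ε) near-uniform distributions with large support, plus a
noise term of probability O(ε). -/
theorem stmt0 :
    ∃ c₁ c₂ c₃ c₄ : ℝ, 0 < c₁ ∧ 0 < c₂ ∧ 0 < c₃ ∧ 0 < c₄ ∧
      ∀ (n : ℕ) (Δ ε : ℝ) (D : (Fin n → Bool) → ℝ),
        0 < n → 0 < ε → 0 ≤ Δ →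
        (∀ x, 0 ≤ D x) → (∑ x, D x = 1) →
        (n : ℝ) - Δ ≤ ent D →
        ∃ (k : ℕ) (p : Fin (k+1) → ℝ) (μ : Fin (k+1) → (Fin n → Bool) → ℝ),
          (k : ℝ) ≤ c₁ * n / ε ∧
          (∀ i, 0 ≤ p i) ∧ (∑ i, p i = 1) ∧
          (∀ i x, 0 ≤ μ i x) ∧ (∀ i, ∑ x, μ i x = 1) ∧
          (∀ x, D x = ∑ i, p i * μ i x) ∧
          p 0 ≤ c₂ * ε ∧
          (∀ i : Fin (k+1), i ≠ 0 →
            (n : ℝ) - Δ / ε - Real.logb 2 (c₃ * n / ε)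
              ≤ Real.logb 2 ((Function.support (μ i)).ncard) ∧
            tvDist (μ i)
              (fun x => if x ∈ Function.support (μ i)
                then ((Function.support (μ i)).ncard : ℝ)⁻¹ else 0) ≤ c₄ * ε) := by
  refine ⟨4, 2, 4, 1, by norm_num, by norm_num, by norm_num, by norm_num, ?_⟩
  intro n Δ ε D hn hε hΔ hD0 hD1 hent
  by_cases hεhalf : 1/2 ≤ ε
  · refine ⟨0, fun _ => 1, fun _ => D, ?_, fun _ => zero_le_one, by simp,
      fun _ => hD0, fun _ => hD1, fun x => by simp, by simp; linarith, ?_⟩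
    · have : (0:ℝ) < 4 * n / ε := by positivity
      simpa using this.le
    · intro i hi
      exact absurd (Fin.fin_one_eq_zero i) hi
  push_neg at hεhalf
  -- main construction
  have hn1 : (1:ℝ) ≤ n := by exact_mod_cast hn
  set N := 2^n with hN
  have hNpos : 0 < N := Nat.pow_pos (by norm_num)
  have hcard : Fintype.card (Fin n → Bool) = N := by
    simp [hN]
  obtain ⟨ι, hι⟩ : ∃ ι : Fin N ≃ (Fin n → Bool), ∀ a b : Fin N, a ≤ b → D (ι b) ≤ D (ι a) := by
    let e : Fin N ≃ (Fin n → Bool) := (finCongr hcard.symm).trans (Fintype.equivFin _).symm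
    let f : Fin N → ℝ := fun i => -D (e i)
    refine ⟨(Tuple.sort f).trans e, ?_⟩
    intro a b hab
    have h := Tuple.monotone_sort f hab
    simp only [Function.comp_apply, f] at h
    simp only [Equiv.trans_apply]
    linarith
  set d : ℕ → ℝ := fun t => if h : t < N then D (ι ⟨t, h⟩) else 0 with hd
  have hd_nonneg : ∀ t, 0 ≤ d t := by
    intro t
    by_cases h : t < N <;> simp [hd, h, hD0]
  have hd_eq : ∀ (j : Fin N), d (j : ℕ) = D (ι j) := by
    intro j; simp [hd, j.isLt]
  have hd_anti : ∀ a b : ℕ, a ≤ b → d b ≤ d a := by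
    intro a b hab
    by_cases hbN : b < N
    · have haN : a < N := lt_of_le_of_lt hab hbN
      simp only [hd, dif_pos hbN, dif_pos haN]
      exact hι ⟨a, haN⟩ ⟨b, hbN⟩ hab
    · simp only [hd, dif_neg hbN]
      exact hd_nonneg a
  set A : ℕ → Finset (Fin n → Bool) := fun t => univ.filter (fun x => ((ι.symm x : ℕ)) ≤ t) with hA
  have hmemA : ∀ t x, x ∈ A t ↔ (ι.symm x : ℕ) ≤ t := by
    intro t x; simp [hA]
  have hAcard : ∀ t, t < N → (A t).card = t + 1 := by
    intro t ht
    have hinj : Function.Injective (fun j : Fin (t+1) => ι (Fin.castLE ht j)) := by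
      intro a b hab
      have h2 := ι.injective hab
      exact Fin.castLE_injective ht h2
    have heq : A t = Finset.image (fun j : Fin (t+1) => ι (Fin.castLE ht j)) Finset.univ := by
      ext x
      simp only [hmemA, Finset.mem_image, Finset.mem_univ, true_and]
      constructor
      · intro hx
        refine ⟨⟨(ι.symm x : ℕ), by omega⟩, ?_⟩
        have hc : Fin.castLE ht ⟨(ι.symm x : ℕ), by omega⟩ = ι.symm x := by
          apply Fin.ext; simp
        rw [hc]; exact ι.apply_symm_apply x
      · rintro ⟨j, rfl⟩
        simp
        omega
    rw [heq, Finset.card_image_of_injective _ hinj, Finset.card_univ, Fintype.card_fin]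
  set u : ℕ → (Fin n → Bool) → ℝ := fun t x => if x ∈ A t then ((t : ℝ) + 1)⁻¹ else 0 with hu
  set w : ℕ → ℝ := fun t => ((t : ℝ) + 1) * (d t - d (t+1)) with hw
  have hu_nonneg : ∀ t x, 0 ≤ u t x := by
    intro t x
    by_cases h : x ∈ A t <;> simp [hu, h]
    positivity
  have hw_nonneg : ∀ t, 0 ≤ w t := by
    intro t
    have h1 := hd_anti t (t+1) (Nat.le_succ t)
    have h0 : (0:ℝ) ≤ (t:ℝ)+1 := by positivity
    simp only [hw]
    nlinarith
  have hu_sum : ∀ t, t < N → ∑ x, u t x = 1 := by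
    intro t ht
    simp only [hu]
    rw [Finset.sum_ite_mem, Finset.univ_inter, Finset.sum_const, hAcard t ht, nsmul_eq_mul]
    have : ((t:ℝ)+1) ≠ 0 := by positivity
    push_cast
    field_simp
  have hlayer : ∀ x, ∑ t ∈ range N, w t * u t x = D x := by
    intro x
    have hjx : ((ι.symm x : ℕ)) < N := (ι.symm x).isLt
    have hcongr : ∀ t ∈ range N, w t * u t x
        = (if (ι.symm x : ℕ) ≤ t then d t - d (t+1) else 0) := by
      intro t ht
      by_cases hxt : x ∈ A t
      · rw [if_pos ((hmemA t x).mp hxt)]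
        simp only [hw, hu, if_pos hxt]
        have : ((t:ℝ)+1) ≠ 0 := by positivity
        field_simp
      · rw [if_neg (fun h => hxt ((hmemA t x).mpr h))]
        simp [hu, hxt]
    rw [Finset.sum_congr rfl hcongr, telescope2 d _ N hjx.le]
    have h0 : d N = 0 := by simp [hd]
    rw [h0, sub_zero, hd_eq (ι.symm x), ι.apply_symm_apply]
  have hw_sum : ∑ t ∈ range N, w t = 1 := by
    have h1 : ∑ x, D x = ∑ x, ∑ t ∈ range N, w t * u t x :=
      Finset.sum_congr rfl fun x _ => (hlayer x).symm
    rw [hD1, Finset.sum_comm] at h1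
    have h2 : ∀ t ∈ range N, ∑ x, w t * u t x = w t := by
      intro t ht
      rw [← Finset.mul_sum, hu_sum t (mem_range.mp ht), mul_one]
    rw [Finset.sum_congr rfl h2] at h1
    exact h1.symm
  -- heavy points threshold
  set θ : ℝ := (2:ℝ) ^ (Δ / ε - (n:ℝ)) * (4 * n) with hθ
  have hrpos : (0:ℝ) < (2:ℝ) ^ (Δ / ε - (n:ℝ)) := Real.rpow_pos_of_pos (by norm_num) _
  have hθpos : 0 < θ := by
    have : (0:ℝ) < 4 * n := by positivity
    exact mul_pos hrpos this
  set β : ℝ := ε / θ with hβ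
  have hβpos : 0 < β := div_pos hε hθpos
  have hlogθ : Real.logb 2 θ = Δ / ε - (n:ℝ) + Real.logb 2 (4 * n) := by
    rw [hθ, Real.logb_mul (ne_of_gt hrpos) (by positivity),
      Real.logb_rpow (by norm_num) (by norm_num)]
  have hlogβ : Real.logb 2 β = (n:ℝ) - Δ / ε - Real.logb 2 (4 * n / ε) := by
    rw [hβ, Real.logb_div (ne_of_gt hε) (ne_of_gt hθpos), hlogθ,
        Real.logb_div (by positivity) (ne_of_gt hε)]
    ring
  -- heavy mass
  set q : ℝ := ∑ x ∈ univ.filter (fun x => θ < D x), D x with hq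
  have hq_nonneg : 0 ≤ q := Finset.sum_nonneg fun x _ => hD0 x
  have hqkey : q * (Δ/ε) + q/2 ≤ Δ := by
    have hsum1 : ∑ x, D x * ((n:ℝ) + Real.logb 2 (D x)) ≤ Δ := by
      have h1 : ∑ x, D x * (n:ℝ) = (n:ℝ) := by rw [← Finset.sum_mul, hD1, one_mul]
      have h2 : (n:ℝ) - Δ ≤ - ∑ x, D x * Real.logb 2 (D x) := hent
      have h3 : ∑ x, D x * ((n:ℝ) + Real.logb 2 (D x))
          = (n:ℝ) + ∑ x, D x * Real.logb 2 (D x) := by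
        have hx : ∀ x ∈ Finset.univ, D x * ((n:ℝ) + Real.logb 2 (D x))
            = D x * (n:ℝ) + D x * Real.logb 2 (D x) := fun x _ => by ring
        rw [Finset.sum_congr rfl hx, Finset.sum_add_distrib, h1]
      rw [h3]; linarith
    have c2pos : (0:ℝ) < Real.log 2 := Real.log_pos (by norm_num)
    have hlow : ∀ x : (Fin n → Bool),
        (D x - ((2:ℝ)^n)⁻¹) * (Real.log 2)⁻¹ ≤ D x * ((n:ℝ) + Real.logb 2 (D x)) := by
      intro x
      rcases eq_or_lt_of_le (hD0 x) with h0 | h0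
      · rw [← h0]
        have : (0:ℝ) < ((2:ℝ)^n)⁻¹ := by positivity
        simp only [zero_mul, zero_sub, mul_zero]
        rw [neg_mul]
        simp only [Left.neg_nonpos_iff]
        positivity
      · have hkey : (1 - ((2:ℝ)^n * D x)⁻¹) ≤ Real.log ((2:ℝ)^n * D x) := by
          have h2 := Real.log_le_sub_one_of_pos (x := ((2:ℝ)^n * D x)⁻¹) (by positivity)
          rw [Real.log_inv] at h2
          linarith
        have hlogb : (n:ℝ) + Real.logb 2 (D x) = Real.log ((2:ℝ)^n * D x) / Real.log 2 := by
          rw [Real.log_mul (by positivity) (ne_of_gt h0), Real.log_pow, Real.logb]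
          field_simp
        rw [hlogb, div_eq_mul_inv, ← mul_assoc]
        apply mul_le_mul_of_nonneg_right _ (inv_nonneg.mpr c2pos.le)
        have h4 := mul_le_mul_of_nonneg_left hkey h0.le
        have hid : D x * (1 - ((2:ℝ)^n * D x)⁻¹) = D x - ((2:ℝ)^n)⁻¹ := by
          field_simp
        rw [hid] at h4
        exact h4
    have hhigh : ∀ x ∈ univ.filter (fun x => θ < D x),
        D x * (Δ/ε + Real.logb 2 (4*n)) ≤ D x * ((n:ℝ) + Real.logb 2 (D x)) := by
      intro x hx
      rw [Finset.mem_filter] at hx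
      apply mul_le_mul_of_nonneg_left _ (hD0 x)
      have h5 : Real.logb 2 θ ≤ Real.logb 2 (D x) :=
        Real.logb_le_logb_of_le (by norm_num) hθpos hx.2.le
      rw [hlogθ] at h5; linarith
    -- assemble
    have hsplit := Finset.sum_filter_add_sum_filter_not Finset.univ (fun x => θ < D x)
      (fun x => D x * ((n:ℝ) + Real.logb 2 (D x)))
    have hsplitD := Finset.sum_filter_add_sum_filter_not Finset.univ (fun x => θ < D x) D
    rw [hD1] at hsplitD
    have hHlow : q * (Δ/ε + Real.logb 2 (4*n))
        ≤ ∑ x ∈ univ.filter (fun x => θ < D x), D x * ((n:ℝ) + Real.logb 2 (D x)) := by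
      rw [hq, Finset.sum_mul]
      exact Finset.sum_le_sum hhigh
    set Lf := univ.filter (fun x => ¬ θ < D x) with hLf
    have hLsum : (∑ x ∈ Lf, D x - (Lf.card : ℝ) * ((2:ℝ)^n)⁻¹) * (Real.log 2)⁻¹
        ≤ ∑ x ∈ Lf, D x * ((n:ℝ) + Real.logb 2 (D x)) := by
      have := Finset.sum_le_sum (fun x (_ : x ∈ Lf) => hlow x)
      calc (∑ x ∈ Lf, D x - (Lf.card : ℝ) * ((2:ℝ)^n)⁻¹) * (Real.log 2)⁻¹
          = ∑ x ∈ Lf, (D x - ((2:ℝ)^n)⁻¹) * (Real.log 2)⁻¹ := by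
            rw [← Finset.sum_mul]
            congr 1
            rw [Finset.sum_sub_distrib, Finset.sum_const, nsmul_eq_mul]
        _ ≤ _ := this
    have hcardL : (Lf.card : ℝ) * ((2:ℝ)^n)⁻¹ ≤ 1 := by
      have h6 : Lf.card ≤ N := by
        calc Lf.card ≤ Finset.univ.card := Finset.card_filter_le _ _
          _ = N := by rw [Finset.card_univ, hcard]
      have h7 : (Lf.card : ℝ) ≤ (2:ℝ)^n := by
        have : ((N:ℕ):ℝ) = (2:ℝ)^n := by rw [hN]; push_cast; ring
        rw [← this]; exact_mod_cast h6
      have h8 : (0:ℝ) < (2:ℝ)^n := by positivity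
      calc (Lf.card : ℝ) * ((2:ℝ)^n)⁻¹ ≤ (2:ℝ)^n * ((2:ℝ)^n)⁻¹ :=
            mul_le_mul_of_nonneg_right h7 (by positivity)
        _ = 1 := by field_simp
    have hC2 : (2:ℝ) ≤ Real.logb 2 (4*n) := by
      have h9 : Real.logb 2 (4:ℝ) ≤ Real.logb 2 (4*n) :=
        Real.logb_le_logb_of_le (by norm_num) (by norm_num) (by nlinarith)
      have h10 : Real.logb 2 (4:ℝ) = 2 := by
        rw [show (4:ℝ) = 2^(2:ℕ) by norm_num, Real.logb_pow,
          Real.logb_self_eq_one (by norm_num)]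
        norm_num
      linarith
    have hc32 : (Real.log 2)⁻¹ ≤ 3/2 := by
      have h11 : (2/3:ℝ) ≤ Real.log 2 := by linarith [Real.log_two_gt_d9]
      have h12 := inv_anti₀ (by norm_num : (0:ℝ) < 2/3) h11
      norm_num at h12
      linarith
    have e1 : ∑ x ∈ Lf, D x = 1 - q := by linarith
    rw [e1] at hLsum
    have hqC : q * (Δ/ε + 2) ≤ q * (Δ/ε + Real.logb 2 (4*n)) :=
      mul_le_mul_of_nonneg_left (by linarith) hq_nonneg
    have hqc : q * (Real.log 2)⁻¹ ≤ q * (3/2) :=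
      mul_le_mul_of_nonneg_left hc32 hq_nonneg
    have h1ms : 0 ≤ (1 - (Lf.card : ℝ) * ((2:ℝ)^n)⁻¹) * (Real.log 2)⁻¹ :=
      mul_nonneg (by linarith) (inv_nonneg.mpr c2pos.le)
    have e2 : (1 - q - (Lf.card : ℝ) * ((2:ℝ)^n)⁻¹) * (Real.log 2)⁻¹
        = (1 - (Lf.card : ℝ) * ((2:ℝ)^n)⁻¹) * (Real.log 2)⁻¹ - q * (Real.log 2)⁻¹ := by
      ring
    have e3 : q * (Δ/ε + 2) = q * (Δ/ε) + 2*q := by ring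
    linarith
  have hqε : q ≤ ε := by
    by_contra hcon
    push_neg at hcon
    have h1 : q * (Δ/ε) = Δ * (q/ε) := by ring
    have h2 : Δ * (q/ε) - Δ = Δ * ((q - ε)/ε) := by
      field_simp
    have h3 : 0 ≤ Δ * ((q - ε)/ε) :=
      mul_nonneg hΔ (div_nonneg (by linarith) hε.le)
    linarith
  -- grouping
  set b : ℝ := 1 + ε with hbdef
  have hb1 : 1 < b := by simp only [hbdef]; linarith
  have hbpos : 0 < b := by linarith
  have hblogpos : 0 < Real.log b := Real.log_pos hb1
  set β' : ℝ := max β 1 with hβ'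
  have hβ'1 : 1 ≤ β' := le_max_right _ _
  have hβ'pos : 0 < β' := lt_of_lt_of_le one_pos hβ'1
  set k : ℕ := ⌈2 * (n:ℝ) / ε⌉₊ + 1 with hk
  set m : ℕ → ℕ := fun t => ⌊Real.logb b (((t:ℝ)+1) / β')⌋₊ + 1 with hm
  have hcap : ∀ t, t < N → m t ≤ k := by
    intro t ht
    have hargpos : 0 < ((t:ℝ)+1)/β' := by positivity
    have hlb : Real.logb b (((t:ℝ)+1)/β') ≤ 2*(n:ℝ)/ε := by
      have ht1 : ((t:ℝ)+1) ≤ ((N:ℕ):ℝ) := by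
        exact_mod_cast Nat.succ_le_of_lt ht
      have h1 : ((t:ℝ)+1)/β' ≤ ((N:ℕ):ℝ) := by
        calc ((t:ℝ)+1)/β' ≤ ((t:ℝ)+1)/1 := by
              apply div_le_div_of_nonneg_left (by positivity) one_pos hβ'1
          _ = (t:ℝ)+1 := by ring
          _ ≤ _ := ht1
      have h2 : Real.logb b (((t:ℝ)+1)/β') ≤ Real.logb b ((N:ℕ):ℝ) :=
        Real.logb_le_logb_of_le hb1 hargpos h1
      have h3 : Real.logb b ((N:ℕ):ℝ) = (n:ℝ) * Real.log 2 / Real.log b := by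
        rw [hN]
        push_cast
        rw [Real.logb, Real.log_pow]
      have hlog2 : Real.log 2 ≤ 1 := by
        have := Real.log_le_sub_one_of_pos (x := 2) (by norm_num)
        linarith
      have hlogb' : ε / 2 ≤ Real.log b := by
        have h4 := Real.log_le_sub_one_of_pos (x := b⁻¹) (by positivity)
        rw [Real.log_inv] at h4
        have hb2 : b ≤ 2 := by simp only [hbdef]; linarith
        have h5 : 1 - b⁻¹ = ε / b := by
          field_simp
          simp only [hbdef]
          ring
        have h6 : ε / 2 ≤ ε / b := by
          apply div_le_div_of_nonneg_left hε.le hbpos hb2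
        linarith
      have h7 : (n:ℝ) * Real.log 2 / Real.log b ≤ 2*(n:ℝ)/ε := by
        rw [div_le_div_iff₀ hblogpos hε]
        have ha : 2*(n:ℝ) * (ε/2) ≤ 2*(n:ℝ)*Real.log b :=
          mul_le_mul_of_nonneg_left hlogb' (by positivity)
        have hb' : (n:ℝ)*ε*Real.log 2 ≤ (n:ℝ)*ε*1 :=
          mul_le_mul_of_nonneg_left hlog2 (by positivity)
        nlinarith
      linarith
    have h8 : ⌊Real.logb b (((t:ℝ)+1)/β')⌋₊ ≤ ⌈2*(n:ℝ)/ε⌉₊ := by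
      calc ⌊Real.logb b (((t:ℝ)+1)/β')⌋₊ ≤ ⌊2*(n:ℝ)/ε⌋₊ := Nat.floor_le_floor hlb
        _ ≤ ⌈2*(n:ℝ)/ε⌉₊ := Nat.floor_le_ceil _
    simp only [hm, hk]
    omega
  set grp : ℕ → Fin (k+1) := fun t =>
    if ((t:ℝ)+1) < β' then 0 else ⟨min (m t) k, Nat.lt_succ_of_le (min_le_right _ _)⟩ with hgrp
  have hgrp_ne : ∀ t, t < N → ∀ i : Fin (k+1), grp t = i → i ≠ 0 →
      β' * b ^ (((i:ℕ):ℝ) - 1) ≤ (t:ℝ)+1 ∧ ((t:ℝ)+1) < β' * b ^ ((i:ℕ):ℝ) := by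
    intro t ht i hgi hi0
    by_cases hcond : ((t:ℝ)+1) < β'
    · exfalso; apply hi0; rw [← hgi]; simp [hgrp, hcond]
    push_neg at hcond
    have hival : (i:ℕ) = m t := by
      rw [← hgi]
      simp only [hgrp, if_neg (not_lt.mpr hcond)]
      exact Nat.min_eq_left (hcap t ht)
    have hm1 : 1 ≤ m t := by simp [hm]
    have hargpos : 0 < ((t:ℝ)+1)/β' := by positivity
    have harg1 : 1 ≤ ((t:ℝ)+1)/β' := (one_le_div hβ'pos).mpr hcond
    have ha0 : 0 ≤ Real.logb b (((t:ℝ)+1)/β') := Real.logb_nonneg hb1 harg1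
    have hfl : ⌊Real.logb b (((t:ℝ)+1)/β')⌋₊ = (i:ℕ) - 1 := by
      simp only [hm] at hival
      omega
    rw [Nat.floor_eq_iff ha0] at hfl
    obtain ⟨hfl1, hfl2⟩ := hfl
    have hi1 : 1 ≤ (i:ℕ) := by
      rw [hival]; exact hm1
    have hicast : (((i:ℕ) - 1 : ℕ):ℝ) = ((i:ℕ):ℝ) - 1 := by
      push_cast [hi1]
      ring
    constructor
    · have h1 := (Real.le_logb_iff_rpow_le hb1 hargpos).mp hfl1
      rw [hicast] at h1
      have h2 := (le_div_iff₀ hβ'pos).mp h1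
      linarith
    · have h2 : Real.logb b (((t:ℝ)+1)/β') < ((i:ℕ):ℝ) := by
        rw [hicast] at hfl2
        linarith
      have h3 := (Real.logb_lt_iff_lt_rpow hb1 hargpos).mp h2
      have h4 := (div_lt_iff₀ hβ'pos).mp h3
      linarith
  -- fibers and distributions
  set F : Fin (k+1) → Finset ℕ := fun i => (range N).filter (fun t => grp t = i) with hF
  set p : Fin (k+1) → ℝ := fun i => ∑ t ∈ F i, w t with hp
  have hp_nonneg : ∀ i, 0 ≤ p i := fun i => Finset.sum_nonneg fun t _ => hw_nonneg t
  have hNsub : N - 1 < N := by omega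
  set μ : Fin (k+1) → (Fin n → Bool) → ℝ :=
    fun i x => if p i = 0 then u (N-1) x else (p i)⁻¹ * ∑ t ∈ F i, w t * u t x with hμ
  have hp_sum : ∑ i, p i = 1 := by
    simp only [hp, hF]
    rw [Finset.sum_fiberwise]
    exact hw_sum
  have hμ_nonneg : ∀ i x, 0 ≤ μ i x := by
    intro i x
    simp only [hμ]
    split
    · exact hu_nonneg _ x
    · exact mul_nonneg (inv_nonneg.mpr (hp_nonneg i))
        (Finset.sum_nonneg fun t _ => mul_nonneg (hw_nonneg t) (hu_nonneg t x))
  have hμ_sum : ∀ i, ∑ x, μ i x = 1 := by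
    intro i
    simp only [hμ]
    by_cases hpi : p i = 0
    · simp only [if_pos hpi]
      exact hu_sum (N-1) hNsub
    · simp only [if_neg hpi]
      rw [← Finset.mul_sum, Finset.sum_comm]
      have h2 : ∀ t ∈ F i, ∑ x, w t * u t x = w t := by
        intro t ht
        have htN : t < N := mem_range.mp (Finset.mem_of_mem_filter t ht)
        rw [← Finset.mul_sum, hu_sum t htN, mul_one]
      rw [Finset.sum_congr rfl h2]
      have h3 : ∑ t ∈ F i, w t = p i := rfl
      rw [h3, inv_mul_cancel₀ hpi]
  have hdecomp : ∀ x, D x = ∑ i, p i * μ i x := by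
    intro x
    have hterm : ∀ i : Fin (k+1), p i * μ i x = ∑ t ∈ F i, w t * u t x := by
      intro i
      by_cases hpi : p i = 0
      · simp only [hμ, if_pos hpi, hpi, zero_mul]
        symm
        apply Finset.sum_eq_zero
        intro t ht
        have hpi' : ∑ t ∈ F i, w t = 0 := hpi
        have hwt : w t = 0 :=
          (Finset.sum_eq_zero_iff_of_nonneg (fun t _ => hw_nonneg t)).mp hpi' t ht
        rw [hwt, zero_mul]
      · simp only [hμ, if_neg hpi]
        rw [← mul_assoc, mul_inv_cancel₀ hpi, one_mul]
    rw [Finset.sum_congr rfl (fun i _ => hterm i)]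
    simp only [hF]
    rw [Finset.sum_fiberwise]
    exact (hlayer x).symm
  have hkbound : (k:ℝ) ≤ 4 * n / ε := by
    have h1 : ((⌈2*(n:ℝ)/ε⌉₊:ℝ)) < 2*(n:ℝ)/ε + 1 := Nat.ceil_lt_add_one (by positivity)
    have h2 : (k:ℝ) = (⌈2*(n:ℝ)/ε⌉₊:ℝ) + 1 := by rw [hk]; push_cast; ring
    have h3 : (2:ℝ) ≤ 2*(n:ℝ)/ε := by
      rw [le_div_iff₀ hε]
      nlinarith
    have h4 : 4*(n:ℝ)/ε - 2*(n:ℝ)/ε = 2*(n:ℝ)/ε := by ring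
    linarith
  -- noise bound
  set M0 : ℕ := min ⌈β' - 1⌉₊ N with hM0
  have hF0 : F 0 = range M0 := by
    ext t
    simp only [hF, Finset.mem_filter, Finset.mem_range, hM0, Nat.lt_min]
    constructor
    · rintro ⟨htN, hg⟩
      refine ⟨?_, htN⟩
      by_cases hcond : ((t:ℝ)+1) < β'
      · rw [Nat.lt_ceil]
        linarith
      · exfalso
        have hne : grp t ≠ 0 := by
          simp only [hgrp, if_neg hcond]
          intro hcontra
          have hval := congrArg Fin.val hcontra
          simp only [Fin.val_zero] at hval
          have hc := hcap t htN
          have hm1 : 1 ≤ m t := by simp [hm]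
          omega
        exact hne hg
    · rintro ⟨hceil, htN⟩
      have hcond : ((t:ℝ)+1) < β' := by
        have := Nat.lt_ceil.mp hceil
        linarith
      exact ⟨htN, by simp [hgrp, hcond]⟩
  have hqsorted : q = ∑ t ∈ range N, (if θ < d t then d t else 0) := by
    calc q = ∑ x, (if θ < D x then D x else 0) := by rw [hq, Finset.sum_filter]
      _ = ∑ j : Fin N, (if θ < D (ι j) then D (ι j) else 0) := (Equiv.sum_comp ι _).symm
      _ = ∑ j : Fin N, (fun t : ℕ => if θ < d t then d t else 0) ↑j := by
          apply Finset.sum_congr rfl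
          intro j _
          simp only [hd_eq j]
      _ = ∑ t ∈ range N, (if θ < d t then d t else 0) := by
          exact Fin.sum_univ_eq_sum_range (fun t => if θ < d t then d t else 0) N
  have hp0 : p 0 ≤ 2 * ε := by
    have hM0N : M0 ≤ N := min_le_right _ _
    have hbound1 : p 0 ≤ ∑ t ∈ range M0, d t := by
      have he : p 0 = ∑ t ∈ range M0, w t := by simp only [hp]; rw [hF0]
      rw [he]
      have hw_eq : ∑ t ∈ range M0, w t = (∑ t ∈ range M0, d t) - M0 * d M0 := by
        simp only [hw]
        exact telescope1 d M0
      rw [hw_eq]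
      have h1 := hd_nonneg M0
      have h2 : (0:ℝ) ≤ (M0:ℝ) := Nat.cast_nonneg M0
      nlinarith
    have hbound2 : ∑ t ∈ range M0, d t ≤ q + M0 * θ := by
      have hpt : ∀ t ∈ range M0, d t ≤ (if θ < d t then d t else 0) + θ := by
        intro t _
        by_cases hθt : θ < d t
        · rw [if_pos hθt]; linarith
        · rw [if_neg hθt]; push_neg at hθt; linarith
      calc ∑ t ∈ range M0, d t ≤ ∑ t ∈ range M0, ((if θ < d t then d t else 0) + θ) :=
            Finset.sum_le_sum hpt
        _ = (∑ t ∈ range M0, (if θ < d t then d t else 0)) + M0 * θ := by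
            rw [Finset.sum_add_distrib, Finset.sum_const, Finset.card_range, nsmul_eq_mul]
        _ ≤ (∑ t ∈ range N, (if θ < d t then d t else 0)) + M0 * θ := by
            have hsub : range M0 ⊆ range N := Finset.range_subset_range.mpr hM0N
            have hmono := Finset.sum_le_sum_of_subset_of_nonneg
              (f := fun t => if θ < d t then d t else 0) hsub
              (fun t _ _ => by by_cases h : θ < d t <;> simp [h, hd_nonneg t])
            linarith
        _ = q + M0 * θ := by rw [← hqsorted]
    have hM0β : (M0:ℝ) * θ ≤ ε := by
      rcases Nat.eq_zero_or_pos M0 with h0 | h0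
      · rw [h0]; simp; exact hε.le
      · have h1 : (M0:ℝ) ≤ (⌈β' - 1⌉₊:ℝ) := by exact_mod_cast min_le_left _ _
        have h2 : (⌈β' - 1⌉₊:ℝ) < (β' - 1) + 1 := Nat.ceil_lt_add_one (by linarith)
        have h3 : (M0:ℝ) < β' := by linarith
        have h4 : (1:ℝ) ≤ (M0:ℝ) := by exact_mod_cast h0
        have h5 : 1 < β' := lt_of_le_of_lt h4 h3
        have h6 : β' = β := by
          rcases le_or_gt β 1 with hc | hc
          · rw [hβ', max_eq_right hc] at h5
            exact absurd h5 (lt_irrefl 1)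
          · rw [hβ']
            exact max_eq_left hc.le
        have h7 : (M0:ℝ) * θ ≤ β * θ :=
          mul_le_mul_of_nonneg_right (by linarith) hθpos.le
        have h8 : β * θ = ε := by
          rw [hβ]
          field_simp
        linarith
    linarith
  refine ⟨k, p, μ, hkbound, hp_nonneg, hp_sum, hμ_nonneg, hμ_sum, hdecomp, by linarith, ?_⟩
  intro i hi0
  have husupp : ∀ t, Function.support (u t) = ↑(A t) := by
    intro t
    ext x
    simp only [Function.mem_support, hu, Finset.mem_coe]
    by_cases h : x ∈ A t
    · simp only [if_pos h]
      constructor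
      · intro _; exact h
      · intro _; positivity
    · simp [h]
  by_cases hpi : p i = 0
  · -- degenerate component: uniform on everything
    have hμi : μ i = u (N-1) := by
      funext x
      simp only [hμ, if_pos hpi]
    have hsupp : Function.support (μ i) = ↑(A (N-1)) := by rw [hμi, husupp]
    have hncard : (Function.support (μ i)).ncard = N := by
      rw [hsupp, Set.ncard_coe_finset, hAcard _ hNsub]
      omega
    have hcN : ((N-1:ℕ):ℝ) + 1 = ((N:ℕ):ℝ) := by
      have h := Nat.succ_pred_eq_of_pos hNpos
      exact_mod_cast congrArg (fun z : ℕ => (z:ℝ)) h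
    constructor
    · rw [hncard]
      have hN2 : ((N:ℕ):ℝ) = (2:ℝ)^n := by rw [hN]; push_cast; ring
      have hlogN : Real.logb 2 ((N:ℕ):ℝ) = n := by
        rw [hN2, Real.logb_pow, Real.logb_self_eq_one (by norm_num)]
        norm_num
      rw [hlogN]
      have hlog4 : 0 ≤ Real.logb 2 (4*(n:ℝ)/ε) := by
        apply Real.logb_nonneg (by norm_num)
        rw [le_div_iff₀ hε]
        nlinarith
      have hΔε : 0 ≤ Δ/ε := div_nonneg hΔ hε.le
      linarith
    · have huni : (fun x => if x ∈ Function.support (μ i)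
          then ((Function.support (μ i)).ncard : ℝ)⁻¹ else 0) = u (N-1) := by
        funext x
        rw [hncard, hsupp]
        simp only [hu, Finset.mem_coe]
        by_cases hx : x ∈ A (N-1) <;> simp [hx, ← hcN]
      rw [huni, hμi]
      have : tvDist (u (N-1)) (u (N-1)) = 0 := by
        simp [tvDist]
      rw [this]
      positivity
  · -- genuine component
    have hppos : 0 < p i := lt_of_le_of_ne (hp_nonneg i) (Ne.symm hpi)
    set WF : Finset ℕ := (F i).filter (fun t => w t ≠ 0) with hWF
    have hpWF : p i = ∑ t ∈ WF, w t := by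
      simp only [hp, hWF]
      refine (Finset.sum_subset (Finset.filter_subset _ _) ?_).symm
      intro t htF htnW
      by_contra hwt
      exact htnW (Finset.mem_filter.mpr ⟨htF, hwt⟩)
    have hWFne : WF.Nonempty := by
      rcases Finset.eq_empty_or_nonempty WF with he | hne
      · exfalso; apply hpi; rw [hpWF, he, Finset.sum_empty]
      · exact hne
    set T : ℕ := WF.max' hWFne with hT
    have hTmem : T ∈ WF := WF.max'_mem hWFne
    have hTF : T ∈ F i := Finset.mem_of_mem_filter T hTmem
    have hwT : w T ≠ 0 := (Finset.mem_filter.mp hTmem).2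
    have hTN : T < N := mem_range.mp (Finset.mem_filter.mp hTF).1
    have hTgrp : grp T = i := (Finset.mem_filter.mp hTF).2
    have hle : ∀ t ∈ WF, t ≤ T := fun t ht => WF.le_max' t ht
    have hAsub : ∀ t, t ≤ T → A t ⊆ A T := by
      intro t htT x hx
      rw [hmemA] at hx ⊢
      omega
    have hμi : ∀ x, μ i x = (p i)⁻¹ * ∑ t ∈ WF, w t * u t x := by
      intro x
      simp only [hμ, if_neg hpi]
      congr 1
      refine (Finset.sum_subset (Finset.filter_subset _ _) ?_).symm
      intro t htF htnW
      have hwt : w t = 0 := by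
        by_contra hwt
        exact htnW (Finset.mem_filter.mpr ⟨htF, hwt⟩)
      rw [hwt, zero_mul]
    have hsupp : Function.support (μ i) = ↑(A T) := by
      ext x
      simp only [Function.mem_support, Finset.mem_coe]
      constructor
      · intro hne
        rw [hμi x] at hne
        have hSne : ∑ t ∈ WF, w t * u t x ≠ 0 := by
          intro h0; apply hne; rw [h0, mul_zero]
        obtain ⟨t, htWF, htne⟩ := Finset.exists_ne_zero_of_sum_ne_zero hSne
        have hux : u t x ≠ 0 := fun h0 => htne (by rw [h0, mul_zero])
        have hxAt : x ∈ A t := by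
          by_contra hxa
          apply hux
          simp [hu, hxa]
        exact hAsub t (hle t htWF) hxAt
      · intro hxT
        rw [hμi x]
        apply ne_of_gt
        apply mul_pos (inv_pos.mpr hppos)
        apply Finset.sum_pos' (fun t _ => mul_nonneg (hw_nonneg t) (hu_nonneg t x))
        refine ⟨T, hTmem, ?_⟩
        apply mul_pos (lt_of_le_of_ne (hw_nonneg T) (Ne.symm hwT))
        simp only [hu, if_pos hxT]
        positivity
    have hncard : (Function.support (μ i)).ncard = T + 1 := by
      rw [hsupp, Set.ncard_coe_finset, hAcard T hTN]
    obtain ⟨hg1, hg2⟩ := hgrp_ne T hTN i hTgrp hi0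
    have hβT : β ≤ (T:ℝ) + 1 := by
      have hm1 : 1 ≤ (i:ℕ) := by
        rcases Nat.eq_zero_or_pos (i:ℕ) with h0 | h0
        · exact absurd (Fin.ext h0) hi0
        · exact h0
      have hexp : (0:ℝ) ≤ ((i:ℕ):ℝ) - 1 := by
        have h1 : (1:ℝ) ≤ ((i:ℕ):ℝ) := by exact_mod_cast hm1
        linarith
      have h1 : (1:ℝ) ≤ b ^ (((i:ℕ):ℝ) - 1) := Real.one_le_rpow hb1.le hexp
      have h2 : β ≤ β' := le_max_left _ _
      nlinarith
    have hT1pos : (0:ℝ) < (T:ℝ)+1 := by positivity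
    constructor
    · rw [hncard]
      have hc : ((T+1:ℕ):ℝ) = (T:ℝ)+1 := by push_cast; ring
      rw [hc]
      have h1 : Real.logb 2 β ≤ Real.logb 2 ((T:ℝ)+1) :=
        Real.logb_le_logb_of_le (by norm_num) hβpos hβT
      rw [hlogβ] at h1
      exact h1
    · have huni : (fun x => if x ∈ Function.support (μ i)
          then ((Function.support (μ i)).ncard : ℝ)⁻¹ else 0) = u T := by
        funext x
        rw [hncard, hsupp]
        simp only [hu, Finset.mem_coe]
        by_cases hx : x ∈ A T <;> simp [hx]
      rw [huni]
      have hkey : ∀ t ∈ WF, ∑ x, |u t x - u T x| ≤ 2*ε := by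
        intro t htWF
        have htT : t ≤ T := hle t htWF
        have htF : t ∈ F i := Finset.mem_of_mem_filter t htWF
        have htN' : t < N := mem_range.mp (Finset.mem_filter.mp htF).1
        have htgrp : grp t = i := (Finset.mem_filter.mp htF).2
        obtain ⟨hg1t, hg2t⟩ := hgrp_ne t htN' i htgrp hi0
        have hratio : (T:ℝ)+1 < b * ((t:ℝ)+1) := by
          have he1 : b ^ ((i:ℕ):ℝ) = b ^ (((i:ℕ):ℝ) - 1) * b := by
            rw [← Real.rpow_add_one (ne_of_gt hbpos)]
            ring_nf
          calc (T:ℝ)+1 < β' * b ^ ((i:ℕ):ℝ) := hg2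
            _ = b * (β' * b ^ (((i:ℕ):ℝ)-1)) := by rw [he1]; ring
            _ ≤ b * ((t:ℝ)+1) := mul_le_mul_of_nonneg_left hg1t hbpos.le
        have hpoint : ∀ x, |u t x - u T x|
            = (u t x - u T x) + 2 * (if x ∈ A t then 0 else u T x) := by
          intro x
          by_cases hxt : x ∈ A t
          · have hxT : x ∈ A T := hAsub t htT hxt
            simp only [if_pos hxt, hu, if_pos hxT]
            rw [abs_of_nonneg]
            · ring
            · have h2 : ((t:ℝ)+1) ≤ (T:ℝ)+1 := by
                have h3 : (t:ℝ) ≤ (T:ℝ) := by exact_mod_cast htT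
                linarith
              have h4 := inv_anti₀ (by positivity : (0:ℝ) < (t:ℝ)+1) h2
              linarith
          · by_cases hxT : x ∈ A T
            · simp only [if_neg hxt, hu, if_pos hxT]
              rw [zero_sub, abs_neg, abs_of_nonneg (by positivity)]
              ring
            · simp [hu, hxt, hxT]
        have hsum : ∑ x, |u t x - u T x|
            = 2 * (1 - ((t:ℝ)+1) * ((T:ℝ)+1)⁻¹) := by
          rw [Finset.sum_congr rfl (fun x _ => hpoint x)]
          rw [Finset.sum_add_distrib, Finset.sum_sub_distrib, hu_sum t htN', hu_sum T hTN]
          have h1 : ∑ x, (2:ℝ) * (if x ∈ A t then 0 else u T x)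
              = 2 * ((1:ℝ) - ∑ x ∈ A t, u T x) := by
            rw [← Finset.mul_sum]
            congr 1
            have h2 : ∀ x ∈ Finset.univ, (if x ∈ A t then 0 else u T x)
                = u T x - (if x ∈ A t then u T x else 0) := by
              intro x _
              by_cases hx : x ∈ A t <;> simp [hx]
            rw [Finset.sum_congr rfl h2, Finset.sum_sub_distrib, hu_sum T hTN,
              Finset.sum_ite_mem, Finset.univ_inter]
          rw [h1]
          have h3 : ∑ x ∈ A t, u T x = ((t:ℝ)+1) * ((T:ℝ)+1)⁻¹ := by
            have h4 : ∀ x ∈ A t, u T x = ((T:ℝ)+1)⁻¹ := by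
              intro x hx
              simp only [hu, if_pos (hAsub t htT hx)]
            rw [Finset.sum_congr rfl h4, Finset.sum_const, hAcard t htN', nsmul_eq_mul]
            push_cast
            ring
          rw [h3]
          ring
        rw [hsum]
        have h5 : 1 - ((t:ℝ)+1) * ((T:ℝ)+1)⁻¹ ≤ ε := by
          have ht1 : ((t:ℝ)+1) ≤ (T:ℝ)+1 := by
            have h3 : (t:ℝ) ≤ (T:ℝ) := by exact_mod_cast htT
            linarith
          have h6 : ((T:ℝ)+1) - ((t:ℝ)+1) ≤ ε * ((T:ℝ)+1) := by
            simp only [hbdef] at hratio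
            nlinarith
          have h8 := mul_le_mul_of_nonneg_right h6 (inv_nonneg.mpr hT1pos.le)
          have h9 : ((T:ℝ)+1) * ((T:ℝ)+1)⁻¹ = 1 := mul_inv_cancel₀ (ne_of_gt hT1pos)
          have h10 : ε * (((T:ℝ)+1) * ((T:ℝ)+1)⁻¹) = ε := by rw [h9, mul_one]
          nlinarith
        linarith
      have hptbound : ∀ x, |μ i x - u T x|
          ≤ (p i)⁻¹ * ∑ t ∈ WF, w t * |u t x - u T x| := by
        intro x
        have hrw : μ i x - u T x = (p i)⁻¹ * ∑ t ∈ WF, w t * (u t x - u T x) := by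
          rw [hμi x]
          have he2 : ∑ t ∈ WF, w t * (u t x - u T x)
              = (∑ t ∈ WF, w t * u t x) - (∑ t ∈ WF, w t) * u T x := by
            rw [Finset.sum_mul, ← Finset.sum_sub_distrib]
            exact Finset.sum_congr rfl fun t _ => by ring
          rw [he2, ← hpWF, mul_sub, ← mul_assoc, inv_mul_cancel₀ hpi, one_mul]
        rw [hrw, abs_mul, abs_of_nonneg (inv_nonneg.mpr hppos.le)]
        apply mul_le_mul_of_nonneg_left _ (inv_nonneg.mpr hppos.le)
        refine (Finset.abs_sum_le_sum_abs _ _).trans ?_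
        apply Finset.sum_le_sum
        intro t _
        rw [abs_mul, abs_of_nonneg (hw_nonneg t)]
      have hfin : ∑ x, |μ i x - u T x| ≤ 2*ε := by
        calc ∑ x, |μ i x - u T x|
            ≤ ∑ x, (p i)⁻¹ * ∑ t ∈ WF, w t * |u t x - u T x| :=
              Finset.sum_le_sum (fun x _ => hptbound x)
          _ = (p i)⁻¹ * ∑ t ∈ WF, w t * ∑ x, |u t x - u T x| := by
              rw [← Finset.mul_sum, Finset.sum_comm]
              congr 1
              exact Finset.sum_congr rfl fun t _ => (Finset.mul_sum _ _ _).symm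
          _ ≤ (p i)⁻¹ * ∑ t ∈ WF, w t * (2*ε) := by
              apply mul_le_mul_of_nonneg_left _ (inv_nonneg.mpr hppos.le)
              exact Finset.sum_le_sum fun t ht =>
                mul_le_mul_of_nonneg_left (hkey t ht) (hw_nonneg t)
          _ = 2*ε := by
              rw [← Finset.sum_mul, ← hpWF, ← mul_assoc, inv_mul_cancel₀ hpi, one_mul]
      unfold tvDist
      linarith
end

section
/- Let A₁, A₂, ..., A_t, B, and C be discrete random variables such that A₁, ..., A_t are mutually conditionally independent given C. Then I(A₁, A₂, ..., A_t ; B | C) ≥ ∑_{i=1}^t I(A_i ; B | C). -/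
open Finset
open scoped Classical

/-- Pushforward of a distribution `p` on `S` along a map `g : S → α`. -/
noncomputable def push {S α : Type*} [Fintype S] [DecidableEq α] (p : S → ℝ) (g : S → α) :
    α → ℝ := fun a => ∑ s, if g s = a then p s else 0

/-- Conditional mutual information I(X;Y|Z) = H(X,Z) + H(Y,Z) - H(X,Y,Z) - H(Z). -/
noncomputable def condMutInfo {S α β γ : Type*} [Fintype S] [Fintype α] [Fintype β] [Fintype γ]
    [DecidableEq α] [DecidableEq β] [DecidableEq γ]
    (p : S → ℝ) (X : S → α) (Y : S → β) (Z : S → γ) : ℝ :=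
  ent (push p (fun s => (X s, Z s))) + ent (push p (fun s => (Y s, Z s)))
    - ent (push p (fun s => (X s, Y s, Z s))) - ent (push p Z)

section helpers

set_option linter.unusedSectionVars false

variable {S ω ω' : Type*} [Fintype S] [DecidableEq ω] [DecidableEq ω']

lemma push_nonneg (p : S → ℝ) (hp0 : ∀ s, 0 ≤ p s) (g : S → ω) (a : ω) : 0 ≤ push p g a := by
  apply Finset.sum_nonneg; intro s _; split <;> simp [hp0 s]

lemma self_le_push (p : S → ℝ) (hp0 : ∀ s, 0 ≤ p s) (g : S → ω) (s : S) :
    p s ≤ push p g (g s) := by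
  have h0 : ∀ s' : S, (0:ℝ) ≤ if g s' = g s then p s' else 0 := by
    intro s'; split
    · exact hp0 s'
    · exact le_rfl
  have := Finset.single_le_sum (f := fun s' => if g s' = g s then p s' else 0)
    (fun s' _ => h0 s') (Finset.mem_univ s)
  simpa [push] using this

lemma push_map (p : S → ℝ) (f : S → ω) (g : ω → ω') [Fintype ω] :
    push (push p f) g = push p (fun s => g (f s)) := by
  funext a
  unfold push
  calc ∑ y, (if g y = a then ∑ s, if f s = y then p s else 0 else 0)
      = ∑ y, ∑ s, (if f s = y then (if g y = a then p s else 0) else 0) := by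
        apply Finset.sum_congr rfl; intro y _
        by_cases h : g y = a <;> simp [h]
    _ = ∑ s, ∑ y, (if f s = y then (if g y = a then p s else 0) else 0) := Finset.sum_comm
    _ = ∑ s, if g (f s) = a then p s else 0 := by
        apply Finset.sum_congr rfl; intro s _
        simp [Finset.sum_ite_eq]

lemma sum_push_mul [Fintype ω] (p : S → ℝ) (g : S → ω) (F : ω → ℝ) :
    ∑ y, push p g y * F y = ∑ s, p s * F (g s) := by
  unfold push
  calc ∑ y, (∑ s, if g s = y then p s else 0) * F y
      = ∑ y, ∑ s, (if g s = y then p s * F y else 0) := by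
        apply Finset.sum_congr rfl; intro y _
        rw [Finset.sum_mul]
        apply Finset.sum_congr rfl; intro s _; split <;> simp
    _ = ∑ s, ∑ y, (if g s = y then p s * F y else 0) := Finset.sum_comm
    _ = ∑ s, p s * F (g s) := by
        apply Finset.sum_congr rfl; intro s _
        simp [Finset.sum_ite_eq]

lemma ent_push_inj {Ω Ω' : Type*} [Fintype Ω] [Fintype Ω'] [DecidableEq Ω']
    (q : Ω → ℝ) (g : Ω → Ω') (hg : Function.Injective g) : ent (push q g) = ent q := by
  unfold ent
  congr 1
  have hval : ∀ x, push q g (g x) = q x := by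
    intro x
    unfold push
    rw [show (fun s => if g s = g x then q s else 0) = (fun s => if s = x then q s else 0) from
      funext fun s => by simp [hg.eq_iff]]
    simp [Finset.sum_ite_eq']
  have hzero : ∀ y ∉ Finset.univ.image g, push q g y = 0 := by
    intro y hy
    apply Finset.sum_eq_zero; intro s _
    have : g s ≠ y := fun h => hy (Finset.mem_image.2 ⟨s, Finset.mem_univ s, h⟩)
    simp [this]
  rw [← Finset.sum_subset (Finset.subset_univ (Finset.univ.image g))
    (fun y _ hy => by rw [hzero y hy]; simp)]
  rw [Finset.sum_image (fun x _ y _ h => hg h)]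
  apply Finset.sum_congr rfl; intro x _
  rw [hval]

end helpers

section marginals

variable {S α δ : Type*} [Fintype S] [Fintype α] [Fintype δ] [DecidableEq α] [DecidableEq δ]
variable {t : ℕ}

lemma push_snd_apply {ω : Type*} [Fintype ω] [DecidableEq ω] (W : ω × δ → ℝ) (d : δ) :
    push W Prod.snd d = ∑ w, W (w, d) := by
  unfold push
  rw [Fintype.sum_prod_type]
  apply Finset.sum_congr rfl; intro w _
  simp [Finset.sum_ite_eq']

lemma push_pi_apply (W : (Fin t → α) × δ → ℝ) (i : Fin t) (x : α) (d : δ) :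
    push W (fun z => (z.1 i, z.2)) (x, d)
      = ∑ a : Fin t → α, if a i = x then W (a, d) else 0 := by
  unfold push
  rw [Fintype.sum_prod_type]
  apply Finset.sum_congr rfl; intro a _
  simp [Prod.ext_iff, ite_and, Finset.sum_ite_eq']

lemma margA (p : S → ℝ) (A : Fin t → S → α) (Y : S → δ) (d : δ) :
    ∑ a : Fin t → α, push p (fun s => (((fun i => A i s) : Fin t → α), Y s)) (a, d)
      = push p Y d := by
  rw [← push_snd_apply, push_map]

lemma margI (p : S → ℝ) (A : Fin t → S → α) (Y : S → δ) (i : Fin t) (x : α) (d : δ) :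
    push p (fun s => (A i s, Y s)) (x, d)
      = ∑ a : Fin t → α,
          if a i = x then push p (fun s => (((fun i => A i s) : Fin t → α), Y s)) (a, d)
          else 0 := by
  rw [← push_pi_apply, push_map]

lemma margI_sum (p : S → ℝ) (A : Fin t → S → α) (Y : S → δ) (i : Fin t) (d : δ) :
    ∑ x, push p (fun s => (A i s, Y s)) (x, d) = push p Y d := by
  rw [← push_snd_apply, push_map]

lemma prodSum (p : S → ℝ) (A : Fin t → S → α) (Y : S → δ) (d : δ) :
    ∑ a : Fin t → α, ∏ i, push p (fun s => (A i s, Y s)) (a i, d) = (push p Y d) ^ t := by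
  calc ∑ a : Fin t → α, ∏ i, push p (fun s => (A i s, Y s)) (a i, d)
      = ∑ a ∈ Fintype.piFinset (fun _ => (Finset.univ : Finset α)),
          ∏ i, push p (fun s => (A i s, Y s)) (a i, d) := by rw [Fintype.piFinset_univ]
    _ = ∏ i, ∑ x, push p (fun s => (A i s, Y s)) (x, d) :=
        (Finset.prod_univ_sum (fun _ => (Finset.univ : Finset α))
          (fun i x => push p (fun s => (A i s, Y s)) (x, d))).symm
    _ = ∏ _i : Fin t, push p Y d := by
        apply Finset.prod_congr rfl; intro i _; exact margI_sum p A Y i d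
    _ = (push p Y d) ^ t := by simp

lemma le_margA (p : S → ℝ) (hp0 : ∀ s, 0 ≤ p s) (A : Fin t → S → α) (Y : S → δ)
    (a : Fin t → α) (d : δ) :
    push p (fun s => (((fun i => A i s) : Fin t → α), Y s)) (a, d) ≤ push p Y d := by
  rw [← margA p A Y d]
  exact Finset.single_le_sum
    (f := fun a' => push p (fun s => (((fun i => A i s) : Fin t → α), Y s)) (a', d))
    (fun a' _ => push_nonneg p hp0 _ _) (Finset.mem_univ a)

lemma le_margI (p : S → ℝ) (hp0 : ∀ s, 0 ≤ p s) (A : Fin t → S → α) (Y : S → δ)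
    (i : Fin t) (a : Fin t → α) (d : δ) :
    push p (fun s => (((fun i => A i s) : Fin t → α), Y s)) (a, d)
      ≤ push p (fun s => (A i s, Y s)) (a i, d) := by
  rw [margI p A Y i (a i) d]
  have h0 : ∀ a' : Fin t → α,
      (0:ℝ) ≤ if a' i = a i then push p (fun s => (((fun i => A i s) : Fin t → α), Y s)) (a', d)
        else 0 := by
    intro a'; split
    · exact push_nonneg p hp0 _ _
    · exact le_rfl
  have := Finset.single_le_sum
    (f := fun a' => if a' i = a i then
        push p (fun s => (((fun i => A i s) : Fin t → α), Y s)) (a', d) else 0)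
    (fun a' _ => h0 a') (Finset.mem_univ a)
  simpa using this

end marginals
section core

variable {S α δ : Type*} [Fintype S] [Fintype α] [Fintype δ] [DecidableEq α] [DecidableEq δ]
variable {t : ℕ}

lemma entEQ (p : S → ℝ) (A : Fin t → S → α) (Y : S → δ) (hp0 : ∀ s, 0 ≤ p s)
    (hci : ∀ (a : Fin t → α) (c : δ),
      push p (fun s => (((fun i => A i s) : Fin t → α), Y s)) (a, c)
          * (push p Y c) ^ (t - 1)
        = ∏ i, push p (fun s => (A i s, Y s)) (a i, c)) :
    ent (push p (fun s => (((fun i => A i s) : Fin t → α), Y s)))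
        + ((t - 1 : ℕ) : ℝ) * ent (push p Y)
      = ∑ i, ent (push p (fun s => (A i s, Y s))) := by
  have hQ : ∑ z : (Fin t → α) × δ,
        push p (fun s => (((fun i => A i s) : Fin t → α), Y s)) z
          * Real.logb 2 (push p (fun s => (((fun i => A i s) : Fin t → α), Y s)) z)
      = ∑ s, p s * Real.logb 2
          (push p (fun s => (((fun i => A i s) : Fin t → α), Y s)) ((fun i => A i s), Y s)) :=
    sum_push_mul p _ _
  have hR : ∑ d, push p Y d * Real.logb 2 (push p Y d)
      = ∑ s, p s * Real.logb 2 (push p Y (Y s)) := sum_push_mul p _ _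
  have hQi : ∀ i, ∑ y : α × δ,
        push p (fun s => (A i s, Y s)) y * Real.logb 2 (push p (fun s => (A i s, Y s)) y)
      = ∑ s, p s * Real.logb 2 (push p (fun s => (A i s, Y s)) (A i s, Y s)) :=
    fun i => sum_push_mul p _ _
  have key : ∀ s, p s * Real.logb 2
          (push p (fun s => (((fun i => A i s) : Fin t → α), Y s)) ((fun i => A i s), Y s))
        + ((t - 1 : ℕ) : ℝ) * (p s * Real.logb 2 (push p Y (Y s)))
      = ∑ i, p s * Real.logb 2 (push p (fun s => (A i s, Y s)) (A i s, Y s)) := by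
    intro s
    by_cases hp : p s = 0
    · simp [hp]
    have hps : 0 < p s := (hp0 s).lt_of_ne (Ne.symm hp)
    have hQpos : 0 < push p (fun s => (((fun i => A i s) : Fin t → α), Y s)) ((fun i => A i s), Y s) :=
      lt_of_lt_of_le hps (self_le_push p hp0 (fun s => (((fun i => A i s) : Fin t → α), Y s)) s)
    have hRpos : 0 < push p Y (Y s) := lt_of_lt_of_le hps (self_le_push p hp0 Y s)
    have hQipos : ∀ i, 0 < push p (fun s => (A i s, Y s)) (A i s, Y s) :=
      fun i => lt_of_lt_of_le hps (self_le_push p hp0 (fun s => (A i s, Y s)) s)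
    have hfact := hci (fun i => A i s) (Y s)
    have hlog : Real.logb 2
          (push p (fun s => (((fun i => A i s) : Fin t → α), Y s)) ((fun i => A i s), Y s))
          + ((t - 1 : ℕ) : ℝ) * Real.logb 2 (push p Y (Y s))
        = ∑ i, Real.logb 2 (push p (fun s => (A i s, Y s)) (A i s, Y s)) := by
      rw [← Real.logb_pow, ← Real.logb_mul hQpos.ne' (by positivity), hfact,
        Real.logb_prod _ _ (fun i _ => (hQipos i).ne')]
    rw [← Finset.mul_sum, ← hlog]
    ring
  unfold ent
  rw [hQ, hR]
  calc - ∑ s, p s * Real.logb 2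
          (push p (fun s => (((fun i => A i s) : Fin t → α), Y s)) ((fun i => A i s), Y s))
        + ((t - 1 : ℕ) : ℝ) * - ∑ s, p s * Real.logb 2 (push p Y (Y s))
      = - ∑ s, (p s * Real.logb 2
          (push p (fun s => (((fun i => A i s) : Fin t → α), Y s)) ((fun i => A i s), Y s))
        + ((t - 1 : ℕ) : ℝ) * (p s * Real.logb 2 (push p Y (Y s)))) := by
        rw [Finset.sum_add_distrib, ← Finset.mul_sum]
        ring
    _ = - ∑ s, ∑ i, p s * Real.logb 2 (push p (fun s => (A i s, Y s)) (A i s, Y s)) := by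
        rw [Finset.sum_congr rfl (fun s _ => key s)]
    _ = - ∑ i, ∑ s, p s * Real.logb 2 (push p (fun s => (A i s, Y s)) (A i s, Y s)) := by
        rw [Finset.sum_comm]
    _ = ∑ i, - ∑ s, p s * Real.logb 2 (push p (fun s => (A i s, Y s)) (A i s, Y s)) := by
        rw [Finset.sum_neg_distrib]
    _ = ∑ i, - ∑ y : α × δ,
        push p (fun s => (A i s, Y s)) y * Real.logb 2 (push p (fun s => (A i s, Y s)) y) := by
        exact Finset.sum_congr rfl (fun i _ => congrArg Neg.neg (hQi i).symm)

end core
section ineq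

variable {S α δ : Type*} [Fintype S] [Fintype α] [Fintype δ] [DecidableEq α] [DecidableEq δ]
variable {t : ℕ}

lemma entINEQ (p : S → ℝ) (A : Fin t → S → α) (Y : S → δ) (hp0 : ∀ s, 0 ≤ p s) (ht : 1 ≤ t) :
    ent (push p (fun s => (((fun i => A i s) : Fin t → α), Y s)))
        + ((t - 1 : ℕ) : ℝ) * ent (push p Y)
      ≤ ∑ i, ent (push p (fun s => (A i s, Y s))) := by
  have hlb : ∀ y : ℝ, Real.logb 2 y = Real.log y / Real.log 2 := fun y => rfl
  have hlog2 : (0:ℝ) < Real.log 2 := Real.log_pos one_lt_two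
  have hQi2 : ∀ i : Fin t, ∑ y : α × δ,
        push p (fun s => (A i s, Y s)) y * Real.logb 2 (push p (fun s => (A i s, Y s)) y)
      = ∑ z : (Fin t → α) × δ, push p (fun s => (((fun i => A i s) : Fin t → α), Y s)) z
          * Real.logb 2 (push p (fun s => (A i s, Y s)) (z.1 i, z.2)) := by
    intro i
    rw [sum_push_mul p (fun s => (A i s, Y s))
        (fun y => Real.logb 2 (push p (fun s => (A i s, Y s)) y)),
      sum_push_mul p (fun s => (((fun i => A i s) : Fin t → α), Y s))
        (fun z => Real.logb 2 (push p (fun s => (A i s, Y s)) (z.1 i, z.2)))]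
  have hR2 : ∑ d, push p Y d * Real.logb 2 (push p Y d)
      = ∑ z : (Fin t → α) × δ, push p (fun s => (((fun i => A i s) : Fin t → α), Y s)) z
          * Real.logb 2 (push p Y z.2) := by
    rw [sum_push_mul p Y (fun d => Real.logb 2 (push p Y d)),
      sum_push_mul p (fun s => (((fun i => A i s) : Fin t → α), Y s))
        (fun z => Real.logb 2 (push p Y z.2))]
  have key : ∑ z : (Fin t → α) × δ,
      (push p (fun s => (((fun i => A i s) : Fin t → α), Y s)) z
          * (∑ i, Real.logb 2 (push p (fun s => (A i s, Y s)) (z.1 i, z.2)))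
        - push p (fun s => (((fun i => A i s) : Fin t → α), Y s)) z
          * Real.logb 2 (push p (fun s => (((fun i => A i s) : Fin t → α), Y s)) z)
        - ((t - 1 : ℕ) : ℝ) * (push p (fun s => (((fun i => A i s) : Fin t → α), Y s)) z
          * Real.logb 2 (push p Y z.2))) ≤ 0 := by
    rw [Fintype.sum_prod_type_right]
    apply Finset.sum_nonpos
    intro d _
    by_cases hR : push p Y d = 0
    · apply le_of_eq
      apply Finset.sum_eq_zero
      intro a _
      have hQ0 : push p (fun s => (((fun i => A i s) : Fin t → α), Y s)) (a, d) = 0 :=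
        le_antisymm ((le_margA p hp0 A Y a d).trans_eq hR) (push_nonneg p hp0 _ _)
      rw [hQ0]; ring
    · have hRpos : 0 < push p Y d := (push_nonneg p hp0 Y d).lt_of_ne (Ne.symm hR)
      have hb : ∀ a : Fin t → α,
          push p (fun s => (((fun i => A i s) : Fin t → α), Y s)) (a, d)
              * (∑ i, Real.logb 2 (push p (fun s => (A i s, Y s)) (a i, d)))
            - push p (fun s => (((fun i => A i s) : Fin t → α), Y s)) (a, d)
              * Real.logb 2 (push p (fun s => (((fun i => A i s) : Fin t → α), Y s)) (a, d))
            - ((t - 1 : ℕ) : ℝ) * (push p (fun s => (((fun i => A i s) : Fin t → α), Y s)) (a, d)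
              * Real.logb 2 (push p Y d))
          ≤ ((∏ i, push p (fun s => (A i s, Y s)) (a i, d)) / (push p Y d) ^ (t - 1)
              - push p (fun s => (((fun i => A i s) : Fin t → α), Y s)) (a, d)) / Real.log 2 := by
        intro a
        by_cases hQ : push p (fun s => (((fun i => A i s) : Fin t → α), Y s)) (a, d) = 0
        · rw [hQ]
          have h1 : (0:ℝ) ≤ ((∏ i, push p (fun s => (A i s, Y s)) (a i, d)) / (push p Y d) ^ (t - 1)
              - 0) / Real.log 2 := by
            apply div_nonneg _ hlog2.le
            rw [sub_zero]
            exact div_nonneg (Finset.prod_nonneg fun i _ => push_nonneg p hp0 _ _)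
              (pow_nonneg hRpos.le _)
          linarith [h1]
        · have hQpos : 0 < push p (fun s => (((fun i => A i s) : Fin t → α), Y s)) (a, d) :=
            (push_nonneg p hp0 _ _).lt_of_ne (Ne.symm hQ)
          have hQipos : ∀ i, 0 < push p (fun s => (A i s, Y s)) (a i, d) :=
            fun i => lt_of_lt_of_le hQpos (le_margI p hp0 A Y i a d)
          set x := (∏ i, push p (fun s => (A i s, Y s)) (a i, d))
            / (push p (fun s => (((fun i => A i s) : Fin t → α), Y s)) (a, d)
                * (push p Y d) ^ (t - 1)) with hxdef
          have hxpos : 0 < x := by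
            rw [hxdef]
            exact div_pos (Finset.prod_pos fun i _ => hQipos i) (by positivity)
          have hlx : Real.log x = ∑ i, Real.log (push p (fun s => (A i s, Y s)) (a i, d))
              - (Real.log (push p (fun s => (((fun i => A i s) : Fin t → α), Y s)) (a, d))
                + ((t - 1 : ℕ) : ℝ) * Real.log (push p Y d)) := by
            rw [hxdef, Real.log_div (Finset.prod_pos fun i _ => hQipos i).ne' (by positivity),
              Real.log_prod (fun i _ => (hQipos i).ne'),
              Real.log_mul hQpos.ne' (pow_ne_zero _ hRpos.ne'), Real.log_pow]
          calc push p (fun s => (((fun i => A i s) : Fin t → α), Y s)) (a, d)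
              * (∑ i, Real.logb 2 (push p (fun s => (A i s, Y s)) (a i, d)))
            - push p (fun s => (((fun i => A i s) : Fin t → α), Y s)) (a, d)
              * Real.logb 2 (push p (fun s => (((fun i => A i s) : Fin t → α), Y s)) (a, d))
            - ((t - 1 : ℕ) : ℝ) * (push p (fun s => (((fun i => A i s) : Fin t → α), Y s)) (a, d)
              * Real.logb 2 (push p Y d))
              = push p (fun s => (((fun i => A i s) : Fin t → α), Y s)) (a, d)
                  * (Real.log x / Real.log 2) := by
                simp only [hlb]
                rw [hlx, ← Finset.sum_div]
                field_simp
                ring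
            _ ≤ push p (fun s => (((fun i => A i s) : Fin t → α), Y s)) (a, d)
                  * ((x - 1) / Real.log 2) := by
                apply mul_le_mul_of_nonneg_left _ hQpos.le
                exact (div_le_div_iff_of_pos_right hlog2).mpr (Real.log_le_sub_one_of_pos hxpos)
            _ = ((∏ i, push p (fun s => (A i s, Y s)) (a i, d)) / (push p Y d) ^ (t - 1)
                  - push p (fun s => (((fun i => A i s) : Fin t → α), Y s)) (a, d))
                  / Real.log 2 := by
                rw [hxdef]
                field_simp
      calc (∑ a : Fin t → α,
          (push p (fun s => (((fun i => A i s) : Fin t → α), Y s)) (a, d)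
              * (∑ i, Real.logb 2 (push p (fun s => (A i s, Y s)) (a i, d)))
            - push p (fun s => (((fun i => A i s) : Fin t → α), Y s)) (a, d)
              * Real.logb 2 (push p (fun s => (((fun i => A i s) : Fin t → α), Y s)) (a, d))
            - ((t - 1 : ℕ) : ℝ) * (push p (fun s => (((fun i => A i s) : Fin t → α), Y s)) (a, d)
              * Real.logb 2 (push p Y d))))
          ≤ ∑ a : Fin t → α,
            ((∏ i, push p (fun s => (A i s, Y s)) (a i, d)) / (push p Y d) ^ (t - 1)
              - push p (fun s => (((fun i => A i s) : Fin t → α), Y s)) (a, d)) / Real.log 2 :=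
            Finset.sum_le_sum (fun a _ => hb a)
        _ = ((∑ a : Fin t → α, ∏ i, push p (fun s => (A i s, Y s)) (a i, d)) / (push p Y d) ^ (t - 1)
              - ∑ a : Fin t → α, push p (fun s => (((fun i => A i s) : Fin t → α), Y s)) (a, d))
              / Real.log 2 := by
            rw [← Finset.sum_div, Finset.sum_sub_distrib, ← Finset.sum_div]
        _ = ((push p Y d) ^ t / (push p Y d) ^ (t - 1) - push p Y d) / Real.log 2 := by
            rw [prodSum p A Y d, margA p A Y d]
        _ = 0 := by
            rw [show (push p Y d) ^ t = (push p Y d) ^ (t - 1) * push p Y d by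
              rw [← pow_succ, Nat.sub_add_cancel ht]]
            rw [mul_div_cancel_left₀ _ (pow_ne_zero _ hRpos.ne')]
            simp
        _ ≤ 0 := le_rfl
  have e1 : ∑ i : Fin t, -∑ y : α × δ,
        push p (fun s => (A i s, Y s)) y * Real.logb 2 (push p (fun s => (A i s, Y s)) y)
      = - ∑ z : (Fin t → α) × δ, push p (fun s => (((fun i => A i s) : Fin t → α), Y s)) z
          * ∑ i, Real.logb 2 (push p (fun s => (A i s, Y s)) (z.1 i, z.2)) := by
    rw [Finset.sum_neg_distrib]
    congr 1
    rw [Finset.sum_congr rfl (fun i _ => hQi2 i), Finset.sum_comm]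
    exact Finset.sum_congr rfl (fun z _ => (Finset.mul_sum _ _ _).symm)
  have flat : ∑ z : (Fin t → α) × δ, push p (fun s => (((fun i => A i s) : Fin t → α), Y s)) z
          * (∑ i, Real.logb 2 (push p (fun s => (A i s, Y s)) (z.1 i, z.2)))
        - ∑ z : (Fin t → α) × δ, push p (fun s => (((fun i => A i s) : Fin t → α), Y s)) z
          * Real.logb 2 (push p (fun s => (((fun i => A i s) : Fin t → α), Y s)) z)
        - ((t - 1 : ℕ) : ℝ) * ∑ z : (Fin t → α) × δ,
            push p (fun s => (((fun i => A i s) : Fin t → α), Y s)) z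
              * Real.logb 2 (push p Y z.2) ≤ 0 := by
    have h := key
    rw [Finset.sum_sub_distrib, Finset.sum_sub_distrib, ← Finset.mul_sum] at h
    exact h
  unfold ent
  rw [hR2, e1]
  linarith [flat]

end ineq
/-- Fact 2.2(5): conditional super-additivity of mutual information. If A₁,...,A_t are
mutually conditionally independent given C (expressed by the factorization
Pr(A = a, C = c) · Pr(C = c)^(t-1) = ∏ᵢ Pr(Aᵢ = aᵢ, C = c)), then
I(A₁,...,A_t ; B | C) ≥ ∑ᵢ I(Aᵢ ; B | C). -/
theorem stmt4 {S α β γ : Type*} [Fintype S] [Fintype α] [Fintype β] [Fintype γ]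
    [DecidableEq α] [DecidableEq β] [DecidableEq γ]
    (t : ℕ) (p : S → ℝ) (hp0 : ∀ s, 0 ≤ p s) (hp1 : ∑ s, p s = 1)
    (A : Fin t → S → α) (B : S → β) (C : S → γ)
    (hci : ∀ (a : Fin t → α) (c : γ),
      push p (fun s => (((fun i => A i s) : Fin t → α), C s)) (a, c)
          * (push p C c) ^ (t - 1)
        = ∏ i, push p (fun s => (A i s, C s)) (a i, c)) :
    ∑ i, condMutInfo p (A i) B C
      ≤ condMutInfo p (fun s => ((fun i => A i s) : Fin t → α)) B C := by
  rcases Nat.eq_zero_or_pos t with ht | ht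
  · subst ht
    have h1 : (fun s => (((fun i => A i s) : Fin 0 → α), C s))
        = fun s => (((fun i : Fin 0 => i.elim0) : Fin 0 → α), C s) := by
      funext s
      congr 1
      exact Subsingleton.elim _ _
    have h2 : (fun s => (((fun i => A i s) : Fin 0 → α), B s, C s))
        = fun s => (((fun i : Fin 0 => i.elim0) : Fin 0 → α), B s, C s) := by
      funext s
      congr 1
      exact Subsingleton.elim _ _
    have e1 : ent (push p (fun s => (((fun i => A i s) : Fin 0 → α), C s))) = ent (push p C) := by
      rw [h1, ← push_map p C (fun c => (((fun i : Fin 0 => i.elim0) : Fin 0 → α), c))]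
      exact ent_push_inj _ _ (fun c c' h => congrArg Prod.snd h)
    have e2 : ent (push p (fun s => (((fun i => A i s) : Fin 0 → α), B s, C s)))
        = ent (push p (fun s => (B s, C s))) := by
      rw [h2, ← push_map p (fun s => (B s, C s))
        (fun y => (((fun i : Fin 0 => i.elim0) : Fin 0 → α), y))]
      exact ent_push_inj _ _ (fun y y' h => congrArg Prod.snd h)
    have hz : condMutInfo p (fun s => ((fun i => A i s) : Fin 0 → α)) B C = 0 := by
      unfold condMutInfo
      rw [e1, e2]
      ring
    simp [hz]
  · have ht' : 1 ≤ t := ht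
    have hEQ := entEQ p A C hp0 hci
    have hIN := entINEQ p A (fun s => (B s, C s)) hp0 ht'
    have hc : ((t - 1 : ℕ) : ℝ) = (t : ℝ) - 1 := by
      rw [Nat.cast_sub ht']
      simp
    simp only [condMutInfo]
    simp only [Finset.sum_sub_distrib, Finset.sum_add_distrib, Finset.sum_const,
      Finset.card_univ, Fintype.card_fin, nsmul_eq_mul]
    rw [hc] at hEQ hIN
    beta_reduce at hIN
    linarith [hEQ, hIN]
end

section
/- Let G(V∪W, E) be the graph obtained from an instance (x, M) of BHH⁰_{n,t} with t even and ‖x‖₀ = n/2, via the following construction: for each i with x_i = 1, add an edge between v_i and w_i; for each hyperedge e of the perfect t-hypermatching M, add a clique on the vertices {w_i : i ∈ e}. Then: if Mx = 0^{n/t}, the maximum matching size of G equals 3n/4; and if Mx = 1^{n/t}, the maximum matching size of G equals 3n/4 − n/(2t). -/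
open Finset
open scoped Classical

/-- `M` is a matching in the graph `G`: a set of edges of `G` that are pairwise
vertex-disjoint. -/
def IsMatchingIn {V : Type*} (G : SimpleGraph V) (M : Finset (Sym2 V)) : Prop :=
  (∀ e ∈ M, e ∈ G.edgeSet) ∧
  ∀ e ∈ M, ∀ f ∈ M, e ≠ f → ∀ v : V, v ∈ e → v ∉ f

/-- The maximum matching size of a graph on a finite vertex set. -/
noncomputable def matchNum {V : Type*} [Fintype V] (G : SimpleGraph V) : ℕ :=
  sSup {k | ∃ M : Finset (Sym2 V), IsMatchingIn G M ∧ M.card = k}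

lemma pairing {α : Type*} [DecidableEq α] : ∀ (N : ℕ) (S : Finset α), S.card = N → Even S.card →
    ∃ P : Finset (Sym2 α), 2 * P.card = S.card ∧
      (∀ e ∈ P, ∃ a b, a ≠ b ∧ e = s(a, b)) ∧
      (∀ e ∈ P, ∀ v ∈ e, v ∈ S) ∧
      (∀ e ∈ P, ∀ f ∈ P, e ≠ f → ∀ v ∈ e, v ∉ f) := by
  intro N
  induction N using Nat.strong_induction_on with
  | _ N ih =>
    intro S hcard heven
    rcases S.eq_empty_or_nonempty with rfl | ⟨a, ha⟩
    · exact ⟨∅, by simp, by simp, by simp, by simp⟩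
    · have h2 : 2 ≤ S.card := by
        rcases heven with ⟨c, hc⟩
        have : S.card ≠ 0 := by simp [Finset.card_ne_zero, Finset.nonempty_iff_ne_empty.mp ⟨a, ha⟩]
        omega
      have hne : (S.erase a).Nonempty := by
        rw [← Finset.card_pos, Finset.card_erase_of_mem ha]; omega
      obtain ⟨b, hb⟩ := hne
      have hab : a ≠ b := fun h => (Finset.ne_of_mem_erase hb) h.symm
      have hbS : b ∈ S := Finset.mem_of_mem_erase hb
      set S' := (S.erase a).erase b with hS'
      have hS'card : S'.card = S.card - 2 := by
        rw [hS', Finset.card_erase_of_mem hb, Finset.card_erase_of_mem ha]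
        omega
      have hlt : S'.card < N := by omega
      obtain ⟨P, hP1, hP2, hP3, hP4⟩ := ih S'.card hlt S' rfl (by
        rcases heven with ⟨c, hc⟩; exact ⟨c - 1, by omega⟩)
      have hnotinS' : ∀ v, v ∈ (s(a,b) : Sym2 α) → v ∉ S' := by
        intro v hv
        rw [Sym2.mem_iff] at hv
        rcases hv with rfl | rfl
        · simp [hS']
        · simp [hS']
      have hnew : s(a, b) ∉ P := fun hmem =>
        hnotinS' a (by simp) (hP3 _ hmem a (by simp))
      refine ⟨insert s(a, b) P, ?_, ?_, ?_, ?_⟩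
      · rw [Finset.card_insert_of_notMem hnew]; omega
      · intro e he
        rcases Finset.mem_insert.mp he with rfl | he
        · exact ⟨a, b, hab, rfl⟩
        · exact hP2 e he
      · intro e he v hv
        rcases Finset.mem_insert.mp he with rfl | he
        · rcases Sym2.mem_iff.mp hv with rfl | rfl
          · exact ha
          · exact hbS
        · exact Finset.mem_of_mem_erase (Finset.mem_of_mem_erase (hP3 e he v hv))
      · intro e he f hf hef v hv
        rcases Finset.mem_insert.mp he with rfl | he <;>
          rcases Finset.mem_insert.mp hf with rfl | hf
        · exact absurd rfl hef
        · exact fun hvf => hnotinS' v hv (hP3 f hf v hvf)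
        · exact fun hvf => hnotinS' v hvf (hP3 e he v hv)
        · exact hP4 e he f hf hef v hv

lemma construct (n m : ℕ) (x : Fin n → Bool) (h : Fin n → Fin m)
    (G : SimpleGraph (Fin n ⊕ Fin n))
    (hG : ∀ a b, G.Adj a b ↔
      ((∃ i : Fin n, x i = true ∧
          ((a = Sum.inl i ∧ b = Sum.inr i) ∨ (a = Sum.inr i ∧ b = Sum.inl i))) ∨
        (∃ i i' : Fin n, i ≠ i' ∧ h i = h i' ∧
          ((a = Sum.inr i ∧ b = Sum.inr i') ∨ (a = Sum.inr i' ∧ b = Sum.inr i)))))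
    (T : Fin m → Finset (Fin n))
    (hT : ∀ j, ∀ i ∈ T j, h i = j ∧ x i = false)
    (hTe : ∀ j, Even (T j).card) :
    ∃ M₀ : Finset (Sym2 (Fin n ⊕ Fin n)), IsMatchingIn G M₀ ∧
      2 * M₀.card = 2 * (Finset.univ.filter (fun i => x i = true)).card + ∑ j, (T j).card := by
  choose P hP1 hP2 hP3 hP4 using fun j => pairing (T j).card (T j) rfl (hTe j)
  set A : Finset (Sym2 (Fin n ⊕ Fin n)) :=
    (Finset.univ.filter (fun i => x i = true)).image (fun i => s(Sum.inl i, Sum.inr i)) with hA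
  set B : Finset (Sym2 (Fin n ⊕ Fin n)) :=
    Finset.univ.biUnion (fun j => (P j).image (Sym2.map Sum.inr)) with hB
  have injmap : Function.Injective (Sym2.map (Sum.inr : Fin n → Fin n ⊕ Fin n)) :=
    Sym2.map.injective Sum.inr_injective
  have inj1 : Function.Injective (fun i : Fin n => s((Sum.inl i : Fin n ⊕ Fin n), Sum.inr i)) := by
    intro i i' hh
    simp only [Sym2.eq_iff] at hh
    rcases hh with ⟨h1, _⟩ | ⟨h1, _⟩
    · exact Sum.inl_injective h1
    · exact absurd h1 (by simp)
  -- vertex description of B edges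
  have vB : ∀ j, ∀ e' ∈ P j, ∀ v ∈ Sym2.map (Sum.inr : Fin n → Fin n ⊕ Fin n) e',
      ∃ a, v = Sum.inr a ∧ a ∈ T j := by
    intro j e' he' v hv
    rw [Sym2.mem_map] at hv
    obtain ⟨a, ha, rfl⟩ := hv
    exact ⟨a, rfl, hP3 j e' he' a ha⟩
  have hAmem : ∀ e ∈ A, ∃ i, x i = true ∧ e = s(Sum.inl i, Sum.inr i) := by
    intro e he
    rw [hA, Finset.mem_image] at he
    obtain ⟨i, hi, rfl⟩ := he
    exact ⟨i, (Finset.mem_filter.mp hi).2, rfl⟩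
  have hBmem : ∀ e ∈ B, ∃ j, ∃ e' ∈ P j, e = Sym2.map Sum.inr e' := by
    intro e he
    rw [hB, Finset.mem_biUnion] at he
    obtain ⟨j, _, he⟩ := he
    obtain ⟨e', he', rfl⟩ := Finset.mem_image.mp he
    exact ⟨j, e', he', rfl⟩
  refine ⟨A ∪ B, ⟨?_, ?_⟩, ?_⟩
  · -- edges
    intro e he
    rcases Finset.mem_union.mp he with he | he
    · obtain ⟨i, hxi, rfl⟩ := hAmem e he
      rw [SimpleGraph.mem_edgeSet, hG]
      exact Or.inl ⟨i, hxi, Or.inl ⟨rfl, rfl⟩⟩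
    · obtain ⟨j, e', he', rfl⟩ := hBmem e he
      obtain ⟨a, b, hab, rfl⟩ := hP2 j e' he'
      have haT := hP3 j _ he' a (Sym2.mem_mk_left a b)
      have hbT := hP3 j _ he' b (Sym2.mem_mk_right a b)
      rw [Sym2.map_pair_eq, SimpleGraph.mem_edgeSet, hG]
      exact Or.inr ⟨a, b, hab, by rw [(hT j a haT).1, (hT j b hbT).1], Or.inl ⟨rfl, rfl⟩⟩
  · -- disjointness
    intro e he f hf hef v hv hvf
    rcases Finset.mem_union.mp he with he | he <;> rcases Finset.mem_union.mp hf with hf | hf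
    · obtain ⟨i, hxi, rfl⟩ := hAmem e he
      obtain ⟨i', hxi', rfl⟩ := hAmem f hf
      have hii : i ≠ i' := fun hh => hef (by rw [hh])
      rcases Sym2.mem_iff.mp hv with rfl | rfl
      · rcases Sym2.mem_iff.mp hvf with h1 | h1
        · exact hii (Sum.inl_injective h1)
        · exact Sum.inl_ne_inr h1
      · rcases Sym2.mem_iff.mp hvf with h1 | h1
        · exact Sum.inr_ne_inl h1
        · exact hii (Sum.inr_injective h1)
    · obtain ⟨i, hxi, rfl⟩ := hAmem e he
      obtain ⟨j, f', hf', rfl⟩ := hBmem f hf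
      obtain ⟨a, rfl, haT⟩ := vB j f' hf' v hvf
      have hxa := (hT j a haT).2
      rcases Sym2.mem_iff.mp hv with h1 | h1
      · exact Sum.inr_ne_inl h1
      · obtain rfl := Sum.inr_injective h1
        rw [hxi] at hxa; exact Bool.noConfusion hxa
    · obtain ⟨i, hxi, rfl⟩ := hAmem f hf
      obtain ⟨j, e', he', rfl⟩ := hBmem e he
      obtain ⟨a, rfl, haT⟩ := vB j e' he' v hv
      have hxa := (hT j a haT).2
      rcases Sym2.mem_iff.mp hvf with h1 | h1
      · exact Sum.inr_ne_inl h1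
      · obtain rfl := Sum.inr_injective h1
        rw [hxi] at hxa; exact Bool.noConfusion hxa
    · obtain ⟨j, e', he', rfl⟩ := hBmem e he
      obtain ⟨j', f', hf', rfl⟩ := hBmem f hf
      obtain ⟨a, rfl, haT⟩ := vB j e' he' v hv
      obtain ⟨a', ha', ha'T⟩ := vB j' f' hf' _ hvf
      obtain rfl := Sum.inr_injective ha'
      by_cases hjj : j = j'
      · subst hjj
        have hne : e' ≠ f' := fun hh => hef (by rw [hh])
        have hae : a ∈ e' := by
          have := Sym2.mem_map.mp hv
          obtain ⟨c, hc, hc2⟩ := this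
          rwa [show c = a from Sum.inr_injective hc2] at hc
        have haf : a ∈ f' := by
          have := Sym2.mem_map.mp hvf
          obtain ⟨c, hc, hc2⟩ := this
          rwa [show c = a from Sum.inr_injective hc2] at hc
        exact hP4 j e' he' f' hf' hne a hae haf
      · exact hjj (((hT j a haT).1.symm).trans (hT j' a ha'T).1)
  · -- cardinality
    have hdisj : Disjoint A B := by
      rw [Finset.disjoint_left]
      intro e heA heB
      obtain ⟨i, _, rfl⟩ := hAmem e heA
      obtain ⟨j, e', he', heq⟩ := hBmem _ heB
      have hmem : (Sum.inl i : Fin n ⊕ Fin n) ∈ Sym2.map Sum.inr e' := by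
        rw [← heq]; exact Sym2.mem_mk_left _ _
      obtain ⟨a, ha, -⟩ := vB j e' he' (Sum.inl i) hmem
      exact Sum.inl_ne_inr ha
    have hAcard : A.card = (Finset.univ.filter (fun i => x i = true)).card :=
      Finset.card_image_of_injective _ inj1
    have hBcard : B.card = ∑ j, (P j).card := by
      rw [hB, Finset.card_biUnion]
      · exact Finset.sum_congr rfl fun j _ => Finset.card_image_of_injective _ injmap
      · intro j _ j' _ hjj
        dsimp only [Function.onFun]; rw [Finset.disjoint_left]
        intro e hej hej'
        obtain ⟨e1, he1, rfl⟩ := Finset.mem_image.mp hej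
        obtain ⟨e2, he2, heq⟩ := Finset.mem_image.mp hej'
        obtain ⟨a, b, hab, rfl⟩ := hP2 j e1 he1
        have haT := hP3 j _ he1 a (Sym2.mem_mk_left a b)
        have : (Sum.inr a : Fin n ⊕ Fin n) ∈ Sym2.map Sum.inr e2 := by
          rw [heq, Sym2.map_pair_eq]; exact Sym2.mem_mk_left _ _
        obtain ⟨c, hcT, hc⟩ := vB j' e2 he2 _ this
        obtain rfl : a = c := Sum.inr_injective hcT
        exact hjj (((hT j a haT).1.symm).trans (hT j' a hc).1)
    rw [Finset.card_union_of_disjoint hdisj, hAcard, hBcard, Nat.mul_add, Finset.mul_sum]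
    congr 1
    exact Finset.sum_congr rfl fun j _ => hP1 j

lemma upperBound (n m t : ℕ) (x : Fin n → Bool) (h : Fin n → Fin m)
    (hfib : ∀ j : Fin m, (Finset.univ.filter (fun i => h i = j)).card = t)
    (G : SimpleGraph (Fin n ⊕ Fin n))
    (hG : ∀ a b, G.Adj a b ↔
      ((∃ i : Fin n, x i = true ∧
          ((a = Sum.inl i ∧ b = Sum.inr i) ∨ (a = Sum.inr i ∧ b = Sum.inl i))) ∨
        (∃ i i' : Fin n, i ≠ i' ∧ h i = h i' ∧
          ((a = Sum.inr i ∧ b = Sum.inr i') ∨ (a = Sum.inr i' ∧ b = Sum.inr i)))))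
    (M : Finset (Sym2 (Fin n ⊕ Fin n))) (hM : IsMatchingIn G M) :
    ∃ c : Fin m → ℕ, M.card = ∑ j, c j ∧
      ∀ j, 2 * c j ≤ t + (Finset.univ.filter (fun i => h i = j ∧ x i = true)).card := by
  classical
  have estruct : ∀ e ∈ M, (∃ i, x i = true ∧ e = s(Sum.inl i, Sum.inr i)) ∨
      (∃ i i', i ≠ i' ∧ h i = h i' ∧ e = s(Sum.inr i, Sum.inr i')) := by
    intro e he
    induction e using Sym2.ind with
    | _ a b =>
      have hadj := (hG a b).mp ((G.mem_edgeSet).mp (hM.1 _ he))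
      rcases hadj with ⟨i, hxi, ⟨rfl, rfl⟩ | ⟨rfl, rfl⟩⟩ | ⟨i, i', hii, hhi, ⟨rfl, rfl⟩ | ⟨rfl, rfl⟩⟩
      · exact Or.inl ⟨i, hxi, rfl⟩
      · exact Or.inl ⟨i, hxi, Sym2.eq_swap⟩
      · exact Or.inr ⟨i, i', hii, hhi, rfl⟩
      · exact Or.inr ⟨i, i', hii, hhi, Sym2.eq_swap⟩
  have sameFib : ∀ e ∈ M, ∀ i i' : Fin n, Sum.inr i ∈ e → Sum.inr i' ∈ e → h i = h i' := by
    intro e he i i' hi hi'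
    rcases estruct e he with ⟨i0, _, rfl⟩ | ⟨a, b, hab, hhab, rfl⟩
    · obtain rfl : i = i0 := by
        rcases Sym2.mem_iff.mp hi with h1 | h1
        · exact absurd h1 Sum.inr_ne_inl
        · exact Sum.inr_injective h1
      obtain rfl : i' = i := by
        rcases Sym2.mem_iff.mp hi' with h1 | h1
        · exact absurd h1 Sum.inr_ne_inl
        · exact Sum.inr_injective h1
      rfl
    · rcases Sym2.mem_iff.mp hi with h1 | h1 <;> rcases Sym2.mem_iff.mp hi' with h2 | h2 <;>
        [skip; skip; skip; skip] <;>
      · obtain rfl := Sum.inr_injective h1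
        obtain rfl := Sum.inr_injective h2
        first | rfl | exact hhab | exact hhab.symm
  have hasInr : ∀ e ∈ M, ∃ i, Sum.inr i ∈ e := by
    intro e he
    rcases estruct e he with ⟨i, _, rfl⟩ | ⟨a, b, _, _, rfl⟩
    · exact ⟨i, Sym2.mem_mk_right _ _⟩
    · exact ⟨a, Sym2.mem_mk_left _ _⟩
  set Mj : Fin m → Finset (Sym2 (Fin n ⊕ Fin n)) :=
    fun j => M.filter (fun e => ∃ i, Sum.inr i ∈ e ∧ h i = j) with hMj
  have hMjsub : ∀ j, Mj j ⊆ M := fun j => Finset.filter_subset _ _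
  have hunion : Finset.univ.biUnion Mj = M := by
    ext e
    constructor
    · intro he
      obtain ⟨j, -, he⟩ := Finset.mem_biUnion.mp he
      exact hMjsub j he
    · intro he
      obtain ⟨i, hi⟩ := hasInr e he
      exact Finset.mem_biUnion.mpr ⟨h i, Finset.mem_univ _,
        Finset.mem_filter.mpr ⟨he, i, hi, rfl⟩⟩
  have hdisjMj : ∀ j ∈ Finset.univ, ∀ j' ∈ Finset.univ, j ≠ j' → Disjoint (Mj j) (Mj j') := by
    intro j _ j' _ hjj
    rw [Finset.disjoint_left]
    intro e hej hej'
    obtain ⟨heM, i₁, hi₁, hji₁⟩ := Finset.mem_filter.mp hej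
    obtain ⟨-, i₂, hi₂, hji₂⟩ := Finset.mem_filter.mp hej'
    exact hjj (hji₁ ▸ hji₂ ▸ sameFib e heM i₁ i₂ hi₁ hi₂)
  refine ⟨fun j => (Mj j).card, ?_, ?_⟩
  · rw [← hunion, Finset.card_biUnion hdisjMj]
  · intro j
    dsimp only
    set F : Sym2 (Fin n ⊕ Fin n) → Finset (Fin n) :=
      fun e => Finset.univ.filter (fun i => Sum.inr i ∈ e) with hF
    set Aj := (Mj j).filter (fun e => ∃ i : Fin n, Sum.inl i ∈ e) with hAj
    set Bj := (Mj j).filter (fun e => ¬ ∃ i : Fin n, Sum.inl i ∈ e) with hBj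
    have hAB : Aj.card + Bj.card = (Mj j).card :=
      Finset.card_filter_add_card_filter_not _
    -- edges in Aj are pendant
    have hApend : ∀ e ∈ Aj, ∃ i, x i = true ∧ h i = j ∧ e = s(Sum.inl i, Sum.inr i) := by
      intro e heA
      obtain ⟨heMj, i₀, hi₀⟩ := Finset.mem_filter.mp heA
      obtain ⟨heM, i₁, hi₁, hji₁⟩ := Finset.mem_filter.mp heMj
      rcases estruct e heM with ⟨i, hxi, rfl⟩ | ⟨a, b, hab, hhab, rfl⟩
      · obtain rfl : i₁ = i := by
          rcases Sym2.mem_iff.mp hi₁ with h1 | h1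
          · exact absurd h1 Sum.inr_ne_inl
          · exact Sum.inr_injective h1
        exact ⟨i₁, hxi, hji₁, rfl⟩
      · rcases Sym2.mem_iff.mp hi₀ with h1 | h1
        · exact absurd h1 Sum.inl_ne_inr
        · exact absurd h1 Sum.inl_ne_inr
    have hBcli : ∀ e ∈ Bj, ∃ a b, a ≠ b ∧ e = s(Sum.inr a, Sum.inr b) := by
      intro e heB
      obtain ⟨heMj, hno⟩ := Finset.mem_filter.mp heB
      rcases estruct e (hMjsub j heMj) with ⟨i, hxi, rfl⟩ | ⟨a, b, hab, hhab, rfl⟩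
      · exact absurd ⟨i, Sym2.mem_mk_left _ _⟩ hno
      · exact ⟨a, b, hab, rfl⟩
    have hFpend : ∀ i : Fin n, F s(Sum.inl i, Sum.inr i) = {i} := by
      intro i
      ext a
      simp [hF, Sym2.mem_iff]
    have hFcli : ∀ a b : Fin n, F s(Sum.inr a, Sum.inr b) = {a, b} := by
      intro a b
      ext c
      simp [hF, Sym2.mem_iff]
    have hAcard : Aj.card ≤ (Finset.univ.filter (fun i => h i = j ∧ x i = true)).card := by
      have hsub : Aj ⊆ (Finset.univ.filter (fun i => h i = j ∧ x i = true)).image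
          (fun i => s(Sum.inl i, Sum.inr i)) := by
        intro e heA
        obtain ⟨i, hxi, hij, rfl⟩ := hApend e heA
        exact Finset.mem_image.mpr ⟨i, Finset.mem_filter.mpr ⟨Finset.mem_univ _, hij, hxi⟩, rfl⟩
      exact le_trans (Finset.card_le_card hsub) Finset.card_image_le
    have hdisjF : ∀ e ∈ Mj j, ∀ f ∈ Mj j, e ≠ f → Disjoint (F e) (F f) := by
      intro e he f hf hef
      rw [Finset.disjoint_left]
      intro i hie hif
      have hie' : Sum.inr i ∈ e := (Finset.mem_filter.mp hie).2
      have hif' : Sum.inr i ∈ f := (Finset.mem_filter.mp hif).2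
      exact hM.2 e (hMjsub j he) f (hMjsub j hf) hef _ hie' hif'
    have hsumF : ∑ e ∈ Mj j, (F e).card ≤ t := by
      rw [← Finset.card_biUnion hdisjF]
      calc ((Mj j).biUnion F).card ≤ (Finset.univ.filter (fun i => h i = j)).card := by
            apply Finset.card_le_card
            intro i hi
            obtain ⟨e, he, hie⟩ := Finset.mem_biUnion.mp hi
            have hie' : Sum.inr i ∈ e := (Finset.mem_filter.mp hie).2
            obtain ⟨heM, i₁, hi₁, hji₁⟩ := Finset.mem_filter.mp he
            exact Finset.mem_filter.mpr ⟨Finset.mem_univ _,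
              (sameFib e heM i i₁ hie' hi₁).trans hji₁⟩
        _ = t := hfib j
    have hsplit : Aj.card + 2 * Bj.card ≤ t := by
      have h1 : ∑ e ∈ Aj, (F e).card = Aj.card := by
        rw [Finset.sum_congr rfl (fun e he => ?_), Finset.sum_const, smul_eq_mul, mul_one]
        obtain ⟨i, -, -, rfl⟩ := hApend e he
        rw [hFpend i, Finset.card_singleton]
      have h2 : ∑ e ∈ Bj, (F e).card = 2 * Bj.card := by
        rw [Finset.sum_congr rfl (fun e he => ?_), Finset.sum_const, smul_eq_mul, mul_comm]
        obtain ⟨a, b, hab, rfl⟩ := hBcli e he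
        rw [hFcli a b, Finset.card_pair hab]
      have h3 : ∑ e ∈ Aj, (F e).card + ∑ e ∈ Bj, (F e).card = ∑ e ∈ Mj j, (F e).card :=
        Finset.sum_filter_add_sum_filter_not _ _ _
      omega
    omega

/-- Claim 2.5: in the graph `G` on `V ⊔ W` (both copies of `[n]`) built from a BHH⁰
instance `(x, M)` with `t` even and `‖x‖₀ = n/2` — where `v_i ~ w_i` whenever `x_i = 1`,
and the `w`-vertices of each hyperedge (fiber of `h : [n] → [n/t]`, all fibers of size
`t`) form a clique — the maximum matching size is `3n/4` in the Yes case (all fiber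
parities of `x` are 0), and `3n/4 - n/(2t)` in the No case (all fiber parities are 1).
Stated multiplied out to avoid division. -/
theorem stmt5 (n m t : ℕ) (ht : 2 ≤ t) (hteven : Even t) (hnmt : n = m * t)
    (x : Fin n → Bool) (h : Fin n → Fin m)
    (hfib : ∀ j : Fin m, (Finset.univ.filter (fun i => h i = j)).card = t)
    (hx : (Finset.univ.filter (fun i => x i = true)).card * 2 = n)
    (G : SimpleGraph (Fin n ⊕ Fin n))
    (hG : ∀ a b, G.Adj a b ↔
      ((∃ i : Fin n, x i = true ∧
          ((a = Sum.inl i ∧ b = Sum.inr i) ∨ (a = Sum.inr i ∧ b = Sum.inl i))) ∨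
        (∃ i i' : Fin n, i ≠ i' ∧ h i = h i' ∧
          ((a = Sum.inr i ∧ b = Sum.inr i') ∨ (a = Sum.inr i' ∧ b = Sum.inr i))))) :
    ((∀ j : Fin m, (Finset.univ.filter (fun i => h i = j ∧ x i = true)).card % 2 = 0) →
        matchNum G * 4 = 3 * n) ∧
    ((∀ j : Fin m, (Finset.univ.filter (fun i => h i = j ∧ x i = true)).card % 2 = 1) →
        matchNum G * 4 * t = 3 * n * t - 2 * n) := by
  classical
  have ht2 : t % 2 = 0 := Nat.even_iff.mp hteven
  let kf : Fin m → ℕ := fun j => (Finset.univ.filter (fun i => h i = j ∧ x i = true)).card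
  let Sf : Fin m → Finset (Fin n) := fun j => Finset.univ.filter (fun i => h i = j ∧ x i = false)
  let cx : ℕ := (Finset.univ.filter (fun i => x i = true)).card
  have hcx : cx * 2 = n := hx
  have hsplit : ∀ j, kf j + (Sf j).card = t := by
    intro j
    have h1 : (Finset.univ.filter (fun i => h i = j)).filter (fun i => x i = true)
        = Finset.univ.filter (fun i => h i = j ∧ x i = true) := by rw [Finset.filter_filter]
    have h2 : (Finset.univ.filter (fun i => h i = j)).filter (fun i => ¬ x i = true)
        = Sf j := by
      rw [Finset.filter_filter]
      ext i
      simp [Sf, Bool.not_eq_true]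
    have h3 := Finset.card_filter_add_card_filter_not
      (s := Finset.univ.filter (fun i => h i = j)) (p := fun i => x i = true)
    rw [h1, h2, hfib j] at h3
    exact h3
  have hsum1 : ∑ j, kf j = cx := by
    have h0 := Finset.card_eq_sum_card_fiberwise (f := h)
      (s := Finset.univ.filter (fun i => x i = true)) (t := Finset.univ)
      (fun i _ => Finset.mem_univ _)
    show ∑ j, kf j = (Finset.univ.filter (fun i => x i = true)).card
    rw [h0]
    apply Finset.sum_congr rfl
    intro j _
    show (Finset.univ.filter (fun i => h i = j ∧ x i = true)).card = _
    rw [Finset.filter_filter]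
    congr 1
    ext i
    simp [and_comm]
  have hsumS : ∑ j, kf j + ∑ j, (Sf j).card = n := by
    have h1 : ∑ j : Fin m, (kf j + (Sf j).card) = ∑ _j : Fin m, t :=
      Finset.sum_congr rfl (fun j _ => hsplit j)
    rw [Finset.sum_add_distrib, Finset.sum_const, Finset.card_univ, Fintype.card_fin,
      smul_eq_mul] at h1
    rw [h1, ← hnmt]
  constructor
  · -- Yes case
    intro hyes
    have hyes' : ∀ j, kf j % 2 = 0 := hyes
    have hTe : ∀ j, Even (Sf j).card := by
      intro j
      have := hsplit j
      have := hyes' j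
      exact Nat.even_iff.mpr (by omega)
    obtain ⟨M₀, hM₀, hcard₀⟩ := construct n m x h G hG Sf
      (fun j i hi => by simpa using (Finset.mem_filter.mp hi).2) hTe
    have hcard₀' : 2 * M₀.card = 2 * cx + ∑ j, (Sf j).card := hcard₀
    have hub : ∀ k ∈ {k | ∃ M : Finset (Sym2 (Fin n ⊕ Fin n)), IsMatchingIn G M ∧ M.card = k},
        k ≤ M₀.card := by
      rintro k ⟨M, hM, rfl⟩
      obtain ⟨c, hc1, hc2⟩ := upperBound n m t x h hfib G hG M hM
      have hc2' : ∀ j, 2 * c j ≤ t + kf j := hc2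
      have hle : 2 * M.card ≤ n + ∑ j, kf j := by
        rw [hc1, Finset.mul_sum]
        calc ∑ j, 2 * c j ≤ ∑ j, (t + kf j) := Finset.sum_le_sum (fun j _ => hc2' j)
          _ = m * t + ∑ j, kf j := by
              rw [Finset.sum_add_distrib, Finset.sum_const, Finset.card_univ, Fintype.card_fin,
                smul_eq_mul]
          _ = n + ∑ j, kf j := by rw [← hnmt]
      omega
    have hmem : M₀.card ∈ {k | ∃ M : Finset (Sym2 (Fin n ⊕ Fin n)),
        IsMatchingIn G M ∧ M.card = k} := ⟨M₀, hM₀, rfl⟩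
    have heq : matchNum G = M₀.card :=
      le_antisymm (csSup_le ⟨_, hmem⟩ hub) (le_csSup ⟨M₀.card, hub⟩ hmem)
    rw [heq]
    omega
  · -- No case
    intro hno
    have hno' : ∀ j, kf j % 2 = 1 := hno
    have hSodd : ∀ j, (Sf j).card % 2 = 1 := by
      intro j
      have := hsplit j
      have := hno' j
      omega
    have hSne : ∀ j, (Sf j).Nonempty := by
      intro j
      rw [← Finset.card_pos]
      have := hSodd j
      omega
    choose w hw using hSne
    have hTcard : ∀ j, ((Sf j).erase (w j)).card = (Sf j).card - 1 :=
      fun j => Finset.card_erase_of_mem (hw j)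
    have hTe : ∀ j, Even ((Sf j).erase (w j)).card := by
      intro j
      rw [hTcard j]
      have := hSodd j
      exact Nat.even_iff.mpr (by omega)
    obtain ⟨M₀, hM₀, hcard₀⟩ := construct n m x h G hG (fun j => (Sf j).erase (w j))
      (fun j i hi => by
        have := Finset.mem_of_mem_erase hi
        simpa using (Finset.mem_filter.mp this).2) hTe
    have hcard₀' : 2 * M₀.card = 2 * cx + ∑ j, ((Sf j).erase (w j)).card := hcard₀
    have hTsum : ∑ j, ((Sf j).erase (w j)).card + m = ∑ j, (Sf j).card := by
      have h1 : ∑ j : Fin m, (((Sf j).erase (w j)).card + 1) = ∑ j, (Sf j).card := by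
        apply Finset.sum_congr rfl
        intro j _
        rw [hTcard j]
        have := hSodd j
        omega
      rw [Finset.sum_add_distrib, Finset.sum_const, Finset.card_univ, Fintype.card_fin,
        smul_eq_mul, mul_one] at h1
      exact h1
    have hub : ∀ k ∈ {k | ∃ M : Finset (Sym2 (Fin n ⊕ Fin n)), IsMatchingIn G M ∧ M.card = k},
        k ≤ M₀.card := by
      rintro k ⟨M, hM, rfl⟩
      obtain ⟨c, hc1, hc2⟩ := upperBound n m t x h hfib G hG M hM
      have hc2' : ∀ j, 2 * c j + 1 ≤ t + kf j := by
        intro j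
        have h1 : 2 * c j ≤ t + kf j := hc2 j
        have := hno' j
        omega
      have hle : 2 * M.card + m ≤ n + ∑ j, kf j := by
        rw [hc1, Finset.mul_sum]
        calc ∑ j, 2 * c j + m = ∑ j : Fin m, (2 * c j + 1) := by
              rw [Finset.sum_add_distrib, Finset.sum_const, Finset.card_univ, Fintype.card_fin,
                smul_eq_mul, mul_one]
          _ ≤ ∑ j, (t + kf j) := Finset.sum_le_sum (fun j _ => hc2' j)
          _ = m * t + ∑ j, kf j := by
              rw [Finset.sum_add_distrib, Finset.sum_const, Finset.card_univ, Fintype.card_fin,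
                smul_eq_mul]
          _ = n + ∑ j, kf j := by rw [← hnmt]
      omega
    have hmem : M₀.card ∈ {k | ∃ M : Finset (Sym2 (Fin n ⊕ Fin n)),
        IsMatchingIn G M ∧ M.card = k} := ⟨M₀, hM₀, rfl⟩
    have heq : matchNum G = M₀.card :=
      le_antisymm (csSup_le ⟨_, hmem⟩ hub) (le_csSup ⟨M₀.card, hub⟩ hmem)
    rw [heq]
    have h4 : M₀.card * 4 = 3 * n - 2 * m := by omega
    have hmt : 2 * m * t = 2 * n := by rw [hnmt]; ring
    calc M₀.card * 4 * t = (3 * n - 2 * m) * t := by rw [h4]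
      _ = 3 * n * t - 2 * n := by rw [Nat.sub_mul, hmt]
end

section
/- Let H be an (r,t)-Ruzsa–Szemerédi graph on vertex set V₁ of N vertices with induced matchings M₁,...,M_t each of size r, and fix j* ∈ [t]. Let G be formed from k disjoint copies H₁,...,H_k of H by identifying, for each i, all vertices of V(H_i) except the 2r vertices matched by the j*-th matching of H_i, with the corresponding vertices of a common shared set (each copy's j*-th matching vertices remain private to that copy). If in every copy the matching M_{j*} is removed, then the maximum matching size of G is at most N; if in every copy the matching M_{j*} is retained, then the maximum matching size of G is at least k·r. -/
open Finset
open scoped Classical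

/-- Claim 6.2: let `H` be an `(r,t)`-Ruzsa–Szemerédi graph on `N` vertices whose edge
set is the disjoint union of `t` induced matchings `M₁,...,M_t` of size `r` each, and
fix `j*`. Form a graph `G` from `k` copies of `H`, where the map `φ i` sends the
vertices matched by `M_{j*}` to private copies `(i, v)` and identifies all other
vertices across the copies. If the `j*`-th matching is removed from every copy
(`Grem`), then `matchNum Grem ≤ N`; if it is retained in every copy (`Gkeep`), then
`matchNum Gkeep ≥ k·r`. -/
theorem stmt9 (N r t k : ℕ) (jstar : Fin t)
    (H : SimpleGraph (Fin N))
    (M : Fin t → Finset (Sym2 (Fin N)))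
    (hedges : H.edgeSet = ↑(Finset.univ.biUnion M))
    (hdisj : ∀ j j', j ≠ j' → Disjoint (M j) (M j'))
    (hcard : ∀ j, (M j).card = r)
    (hmatch : ∀ j, ∀ e ∈ M j, ∀ f ∈ M j, e ≠ f → ∀ v : Fin N, v ∈ e → v ∉ f)
    (hinduced : ∀ j, ∀ e ∈ H.edgeSet,
      (∀ v : Fin N, v ∈ e → ∃ f ∈ M j, v ∈ f) → e ∈ M j)
    (φ : Fin k → Fin N → (Fin N ⊕ Fin k × Fin N))
    (hφ : ∀ i v, φ i v =
      if ∃ f ∈ M jstar, v ∈ f then Sum.inr (i, v) else Sum.inl v)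
    (Grem Gkeep : SimpleGraph (Fin N ⊕ Fin k × Fin N))
    (hGrem : Grem.edgeSet = ⋃ i : Fin k, (Sym2.map (φ i)) '' (H.edgeSet \ ↑(M jstar)))
    (hGkeep : Gkeep.edgeSet = ⋃ i : Fin k, (Sym2.map (φ i)) '' H.edgeSet) :
    matchNum Grem ≤ N ∧ k * r ≤ matchNum Gkeep := by
  have hφpos : ∀ (i : Fin k) (v : Fin N), (∃ f ∈ M jstar, v ∈ f) → φ i v = Sum.inr (i, v) := by
    intro i v h; rw [hφ]; exact if_pos h
  constructor
  · -- upper bound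
    apply csSup_le
    · exact ⟨0, ∅, ⟨by simp, by simp⟩, rfl⟩
    rintro n ⟨M', ⟨hM'e, hM'm⟩, rfl⟩
    have key : ∀ e' ∈ M', ∃ v : Fin N, Sum.inl v ∈ e' := by
      intro e' he'
      have hmem := hM'e e' he'
      rw [hGrem] at hmem
      simp only [Set.mem_iUnion, Set.mem_image, Set.mem_diff] at hmem
      obtain ⟨i, e, ⟨he1, he2⟩, rfl⟩ := hmem
      by_contra hno
      push_neg at hno
      apply he2
      refine Finset.mem_coe.mpr (hinduced jstar e he1 ?_)
      intro v hv
      by_contra hcon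
      have hphi : φ i v = Sum.inl v := by rw [hφ]; exact if_neg hcon
      exact hno v (by rw [← hphi]; exact Sym2.mem_map.mpr ⟨v, hv, rfl⟩)
    choose f hf using key
    have hinj : ∀ e he e' he', f e he = f e' he' → e = e' := by
      intro e he e' he' hfe
      by_contra hne
      exact hM'm e he e' he' hne (Sum.inl (f e he)) (hf e he)
        (by rw [hfe]; exact hf e' he')
    calc M'.card = Fintype.card {x // x ∈ M'} := (Fintype.card_coe M').symm
      _ ≤ Fintype.card (Fin N) := Fintype.card_le_of_injective
            (fun x => f x.1 x.2) (fun a b h => Subtype.ext (hinj _ _ _ _ h))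
      _ = N := Fintype.card_fin N
  · -- lower bound
    set Mb : Finset (Sym2 (Fin N ⊕ Fin k × Fin N)) :=
      Finset.univ.biUnion (fun i => (M jstar).image (Sym2.map (φ i))) with hMb
    -- form of vertices of image edges
    have hvert : ∀ (i : Fin k), ∀ e ∈ M jstar,
        ∀ x ∈ Sym2.map (φ i) e, ∃ w ∈ e, x = Sum.inr (i, w) := by
      intro i e he x hx
      obtain ⟨w, hw, rfl⟩ := Sym2.mem_map.mp hx
      exact ⟨w, hw, hφpos i w ⟨e, he, hw⟩⟩
    -- injectivity of Sym2.map (φ i) on M jstar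
    have hinjI : ∀ (i : Fin k), ∀ e ∈ M jstar, ∀ e' ∈ M jstar,
        Sym2.map (φ i) e = Sym2.map (φ i) e' → e = e' := by
      intro i e he e' he' heq
      by_contra hne
      have hv : e.out.1 ∈ e := Sym2.out_fst_mem e
      have : Sum.inr (i, e.out.1) ∈ Sym2.map (φ i) e' := by
        rw [← heq]
        rw [← hφpos i e.out.1 ⟨e, he, hv⟩]
        exact Sym2.mem_map.mpr ⟨e.out.1, hv, rfl⟩
      obtain ⟨w, hw, hweq⟩ := hvert i e' he' _ this
      have : e.out.1 = w := by
        injection hweq.symm with h; exact (congrArg Prod.snd h).symm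
      exact hmatch jstar e he e' he' hne e.out.1 hv (this ▸ hw)
    have hMbmatch : IsMatchingIn Gkeep Mb := by
      constructor
      · intro e' he'
        simp only [hMb, Finset.mem_biUnion, Finset.mem_image, Finset.mem_univ,
          true_and] at he'
        obtain ⟨i, e, he, rfl⟩ := he'
        rw [hGkeep]
        refine Set.mem_iUnion.mpr ⟨i, Set.mem_image_of_mem _ ?_⟩
        rw [hedges]
        exact Finset.mem_coe.mpr (Finset.mem_biUnion.mpr ⟨jstar, Finset.mem_univ _, he⟩)
      · intro e' he' f' hf' hne v hv hvf
        simp only [hMb, Finset.mem_biUnion, Finset.mem_image, Finset.mem_univ,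
          true_and] at he' hf'
        obtain ⟨i, e, he, rfl⟩ := he'
        obtain ⟨i', f, hfm, rfl⟩ := hf'
        obtain ⟨w, hw, rfl⟩ := hvert i e he v hv
        obtain ⟨w', hw', hww⟩ := hvert i' f hfm _ hvf
        have hii : i = i' ∧ w = w' := by
          injection hww with h
          exact ⟨congrArg Prod.fst h, congrArg Prod.snd h⟩
        obtain ⟨rfl, rfl⟩ := hii
        rcases eq_or_ne e f with rfl | hef
        · exact hne rfl
        · exact hmatch jstar e he f hfm hef w hw hw'
    have hMbcard : Mb.card = k * r := by
      rw [hMb, Finset.card_biUnion]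
      · have : ∀ i : Fin k, ((M jstar).image (Sym2.map (φ i))).card = r := by
          intro i
          rw [Finset.card_image_of_injOn (fun e he e' he' => hinjI i e he e' he'),
            hcard]
        simp [this, Finset.sum_const, mul_comm]
      · intro i _ i' _ hii'
        refine Finset.disjoint_left.mpr ?_
        intro x hx hx'
        simp only [Finset.mem_image] at hx hx'
        obtain ⟨e, he, rfl⟩ := hx
        obtain ⟨e', he', heq⟩ := hx'
        have hv : e.out.1 ∈ e := Sym2.out_fst_mem e
        have hmem : Sum.inr (i, e.out.1) ∈ Sym2.map (φ i) e := by
          rw [← hφpos i e.out.1 ⟨e, he, hv⟩]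
          exact Sym2.mem_map.mpr ⟨e.out.1, hv, rfl⟩
        rw [← heq] at hmem
        obtain ⟨w, hw, hww⟩ := hvert i' e' he' _ hmem
        injection hww with h
        exact hii' (congrArg Prod.fst h)
    have hbdd : BddAbove {n | ∃ M' : Finset (Sym2 (Fin N ⊕ Fin k × Fin N)),
        IsMatchingIn Gkeep M' ∧ M'.card = n} := by
      refine ⟨Fintype.card (Sym2 (Fin N ⊕ Fin k × Fin N)), ?_⟩
      rintro n ⟨M'', _, rfl⟩
      exact Finset.card_le_univ M''
    exact le_csSup hbdd ⟨Mb, hMbmatch, hMbcard⟩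
end

section
/- Let G(V,E) be a graph, let V₁ ⊆ V host an (r,t)-RS graph H with induced matchings M₁,...,M_t, where r = c·|V₁| for a constant c < 1/4 and |V| = |V₁| + (|V₁| − 2r). Suppose E consists of: (a) for each j ∈ [t], a sub-matching of M_j (for j ≠ j* these are arbitrary subsets; for j = j* it is M_{j*} restricted to a vector x with ‖x‖₀ = r/2), (b) a perfect matching between V₁ \ V(M_{j*}) and V \ V₁, and (c) the p-clique family of a perfect p-hypermatching 𝓜 on R(M_{j*}), with p even. Then: if (x,𝓜) is a Yes instance of BHH⁰_{r,p}, opt(G) ≥ (|V₁| − 2r) + 3r/4, and if it is a No instance, opt(G) ≤ (|V₁| − 2r) + 3r/4 − r/(2p). In particular, taking p ≤ c/(2ε), (1−ε)·opt_Yes > opt_No. -/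
open Finset
open scoped Classical

lemma exists_pairing {α : Type*} [DecidableEq α] (S : Finset α) (hS : Even S.card) :
    ∃ Q : Finset (Sym2 α), (∀ e ∈ Q, ¬ e.IsDiag) ∧
      (∀ e ∈ Q, ∀ w, w ∈ e → w ∈ S) ∧
      (∀ e ∈ Q, ∀ f ∈ Q, e ≠ f → ∀ w, w ∈ e → w ∉ f) ∧
      2 * Q.card = S.card := by
  induction S using Finset.strongInduction with
  | _ S ih =>
    rcases Finset.eq_empty_or_nonempty S with rfl | ⟨a, ha⟩
    · exact ⟨∅, by simp, by simp, by simp, by simp⟩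
    · have h1 : 1 ≤ S.card := Finset.card_pos.mpr ⟨a, ha⟩
      have h2 : 2 ≤ S.card := by
        rcases hS with ⟨k, hk⟩; omega
      have hne : (S.erase a).Nonempty := by
        rw [← Finset.card_pos, Finset.card_erase_of_mem ha]; omega
      obtain ⟨b, hb⟩ := hne
      have hba : b ≠ a := Finset.ne_of_mem_erase hb
      have hbS : b ∈ S := Finset.mem_of_mem_erase hb
      set S' := (S.erase a).erase b with hS'
      have hsub : S' ⊂ S := by
        apply Finset.ssubset_of_subset_of_ssubset
        · exact Finset.erase_subset _ _
        · exact Finset.erase_ssubset ha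
      have hcard : S'.card = S.card - 2 := by
        rw [hS', Finset.card_erase_of_mem hb, Finset.card_erase_of_mem ha]; omega
      have hev : Even S'.card := by rcases hS with ⟨k, hk⟩; rw [hcard, hk]; exact ⟨k-1, by omega⟩
      obtain ⟨Q, hQ1, hQ2, hQ3, hQ4⟩ := ih S' hsub hev
      refine ⟨insert s(a, b) Q, ?_, ?_, ?_, ?_⟩
      · intro e he
        rcases Finset.mem_insert.mp he with rfl | he
        · simpa [Sym2.isDiag_iff_proj_eq] using hba.symm
        · exact hQ1 e he
      · intro e he w hw
        rcases Finset.mem_insert.mp he with rfl | he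
        · rcases Sym2.mem_iff.mp hw with rfl | rfl
          · exact ha
          · exact hbS
        · have := hQ2 e he w hw
          exact Finset.mem_of_mem_erase (Finset.mem_of_mem_erase this)
      · have hnotin : s(a, b) ∉ Q := by
          intro hmem
          have := hQ2 _ hmem a (by simp)
          simp [hS'] at this
        intro e he f hf hef w hwe hwf
        rcases Finset.mem_insert.mp he with rfl | he <;>
          rcases Finset.mem_insert.mp hf with rfl | hf
        · exact hef rfl
        · have := hQ2 f hf w hwf
          rcases Sym2.mem_iff.mp hwe with rfl | rfl
          · simp [hS'] at this
          · simp [hS'] at this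
        · have := hQ2 e he w hwe
          rcases Sym2.mem_iff.mp hwf with rfl | rfl
          · simp [hS'] at this
          · simp [hS'] at this
        · exact hQ3 e he f hf hef w hwe hwf
      · rw [Finset.card_insert_of_notMem, ]
        · rw [Nat.mul_add, hQ4, hcard]; omega
        · intro hmem
          have := hQ2 _ hmem a (by simp)
          simp [hS'] at this

/-- Claim 6.4: `G` is built on `|V₁| + (|V₁| - 2r)` vertices from: sub-matchings of
the `t` induced matchings of an RS graph on `V₁` (with `M_{j*}` given by the edges
`s(u ℓ, v ℓ)` restricted to the vector `x` of Hamming weight `r/2`, and the other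
sub-matchings avoiding `V(M_{j*})` entirely), a perfect matching `P` between
`V₁ \ V(M_{j*})` and `V \ V₁`, and the `p`-clique family `C` of a perfect
`p`-hypermatching `h` on `[r]` (fibers of size `p`, `p` even, `r = q·p`) placed on
`R(M_{j*}) = {v ℓ}`. Then in the Yes case of BHH⁰ (all fiber parities of `x` are 0),
`opt(G) ≥ (|V₁| - 2r) + 3r/4`; in the No case (all parities 1),
`opt(G) ≤ (|V₁| - 2r) + 3r/4 - r/(2p)` (both stated multiplied out); and for
`p ≤ (r/|V₁|)/(2ε)` one has `(1-ε)·opt_Yes > opt_No`. -/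
theorem stmt10 {V : Type*} [Fintype V] [DecidableEq V]
    (N₁ r q p t : ℕ) (jstar : Fin t) (hpeven : Even p) (hppos : 0 < p)
    (hr : r = q * p) (h2r : 2 * r ≤ N₁)
    (hcardV : Fintype.card V = N₁ + (N₁ - 2 * r))
    (V₁ : Finset V) (hV₁ : V₁.card = N₁)
    (u v : Fin r → V)
    (huv : Function.Injective (fun z : Fin r ⊕ Fin r => Sum.elim u v z))
    (huV₁ : ∀ ℓ, u ℓ ∈ V₁) (hvV₁ : ∀ ℓ, v ℓ ∈ V₁)
    (x : Fin r → Bool) (hx : (Finset.univ.filter (fun ℓ => x ℓ = true)).card * 2 = r)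
    (h : Fin r → Fin q)
    (hfib : ∀ j : Fin q, (Finset.univ.filter (fun ℓ => h ℓ = j)).card = p)
    (Msub : Fin t → Finset (Sym2 V))
    (hMstar : Msub jstar
      = (Finset.univ.filter (fun ℓ => x ℓ = true)).image (fun ℓ => s(u ℓ, v ℓ)))
    (hMsub : ∀ j, j ≠ jstar →
      ((∀ e ∈ Msub j, ∀ f ∈ Msub j, e ≠ f → ∀ w : V, w ∈ e → w ∉ f) ∧
        ∀ e ∈ Msub j, (∀ w : V, w ∈ e → w ∈ V₁) ∧ ¬ e.IsDiag ∧
          ¬ (∀ w : V, w ∈ e → ∃ ℓ, w = u ℓ ∨ w = v ℓ)))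
    (P : Finset (Sym2 V))
    (hPmatch : ∀ e ∈ P, ∀ f ∈ P, e ≠ f → ∀ w : V, w ∈ e → w ∉ f)
    (hPend : ∀ e ∈ P, ∃ a b : V, e = s(a, b) ∧ a ∈ V₁ ∧
      (∀ ℓ, a ≠ u ℓ ∧ a ≠ v ℓ) ∧ b ∉ V₁)
    (hPcoverL : ∀ a ∈ V₁, (∀ ℓ, a ≠ u ℓ ∧ a ≠ v ℓ) → ∃ e ∈ P, a ∈ e)
    (hPcoverR : ∀ b : V, b ∉ V₁ → ∃ e ∈ P, b ∈ e)
    (C : Finset (Sym2 V))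
    (hC : C = Finset.univ.filter (fun e : Sym2 V =>
      ∃ ℓ ℓ', ℓ ≠ ℓ' ∧ h ℓ = h ℓ' ∧ e = s(v ℓ, v ℓ')))
    (G : SimpleGraph V)
    (hG : G.edgeSet = ↑((Finset.univ.biUnion Msub) ∪ P ∪ C)) :
    ((∀ j : Fin q, (Finset.univ.filter (fun ℓ => h ℓ = j ∧ x ℓ = true)).card % 2 = 0) →
        4 * (N₁ - 2 * r) + 3 * r ≤ 4 * matchNum G) ∧
    ((∀ j : Fin q, (Finset.univ.filter (fun ℓ => h ℓ = j ∧ x ℓ = true)).card % 2 = 1) →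
        4 * p * matchNum G ≤ 4 * p * (N₁ - 2 * r) + 3 * p * r - 2 * r) ∧
    (∀ ε : ℝ, 0 < ε → ε < 1 → 0 < N₁ →
      (p : ℝ) ≤ ((r : ℝ) / N₁) / (2 * ε) →
      (1 - ε) * (((N₁ - 2 * r : ℕ) : ℝ) + 3 * r / 4)
        > ((N₁ - 2 * r : ℕ) : ℝ) + 3 * r / 4 - r / (2 * p)) := by
  classical
  -- basic injectivity facts
  have hu_inj : Function.Injective u := fun a b hab => by
    have := @huv (Sum.inl a) (Sum.inl b) (by simpa using hab); simpa using this
  have hv_inj : Function.Injective v := fun a b hab => by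
    have := @huv (Sum.inr a) (Sum.inr b) (by simpa using hab); simpa using this
  have huv_ne : ∀ ℓ ℓ', u ℓ ≠ v ℓ' := fun ℓ ℓ' hne => by
    have := @huv (Sum.inl ℓ) (Sum.inr ℓ') (by simpa using hne); simp at this
  set T : Finset (Fin r) := Finset.univ.filter (fun ℓ => x ℓ = true) with hT
  set UV : Finset V := Finset.univ.image u ∪ Finset.univ.image v with hUV
  have hUVmem : ∀ w, w ∈ UV ↔ ∃ ℓ, w = u ℓ ∨ w = v ℓ := by
    intro w
    simp only [hUV, Finset.mem_union, Finset.mem_image, Finset.mem_univ, true_and]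
    constructor
    · rintro (⟨ℓ, rfl⟩ | ⟨ℓ, rfl⟩) <;> exact ⟨ℓ, by simp⟩
    · rintro ⟨ℓ, rfl | rfl⟩
      · exact Or.inl ⟨ℓ, rfl⟩
      · exact Or.inr ⟨ℓ, rfl⟩
  have hUVcard : UV.card = 2 * r := by
    rw [hUV, Finset.card_union_of_disjoint, Finset.card_image_of_injective _ hu_inj,
      Finset.card_image_of_injective _ hv_inj, Finset.card_univ, Fintype.card_fin]
    · ring
    · rw [Finset.disjoint_left]
      rintro w hw hw'
      obtain ⟨ℓ, -, rfl⟩ := Finset.mem_image.mp hw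
      obtain ⟨ℓ', -, h'⟩ := Finset.mem_image.mp hw'
      exact huv_ne ℓ ℓ' h'.symm
  have hUVsub : UV ⊆ V₁ := by
    intro w hw
    obtain ⟨ℓ, rfl | rfl⟩ := (hUVmem w).mp hw
    · exact huV₁ ℓ
    · exact hvV₁ ℓ
  have hOuterCard : (V₁ \ UV).card = N₁ - 2 * r := by
    rw [Finset.card_sdiff_of_subset hUVsub, hUVcard, hV₁]
  have hVoutCard : (V₁ᶜ : Finset V).card = N₁ - 2 * r := by
    rw [Finset.card_compl, hV₁, hcardV]; omega
  -- edge membership in G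
  have hGedge : ∀ e : Sym2 V, e ∈ G.edgeSet ↔ ((∃ j, e ∈ Msub j) ∨ e ∈ P ∨ e ∈ C) := by
    intro e
    rw [hG]
    simp only [Finset.coe_union, Set.mem_union, Finset.mem_coe, Finset.mem_biUnion,
      Finset.mem_univ, true_and]
    tauto
  -- vertex membership facts
  have hPvert : ∀ e ∈ P, ∀ w, w ∈ e → ((∀ ℓ, w ≠ u ℓ ∧ w ≠ v ℓ) ∧ w ∈ V₁) ∨ w ∉ V₁ := by
    intro e he w hw
    obtain ⟨a, b, rfl, ha1, ha2, hb⟩ := hPend e he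
    rcases Sym2.mem_iff.mp hw with rfl | rfl
    · exact Or.inl ⟨ha2, ha1⟩
    · exact Or.inr hb
  have hMstarForm : ∀ e ∈ Msub jstar, ∃ ℓ, x ℓ = true ∧ e = s(u ℓ, v ℓ) := by
    intro e he
    rw [hMstar] at he
    obtain ⟨ℓ, hℓ, rfl⟩ := Finset.mem_image.mp he
    rw [hT] at hℓ
    exact ⟨ℓ, by simpa using hℓ, rfl⟩
  have hCform : ∀ e ∈ C, ∃ ℓ ℓ', ℓ ≠ ℓ' ∧ h ℓ = h ℓ' ∧ e = s(v ℓ, v ℓ') := by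
    intro e he
    rw [hC] at he
    exact (Finset.mem_filter.mp he).2
  -- matchNum facts
  have hbdd : BddAbove {k | ∃ M : Finset (Sym2 V), IsMatchingIn G M ∧ M.card = k} := by
    refine ⟨Fintype.card (Sym2 V), ?_⟩
    rintro k ⟨M, -, rfl⟩
    exact Finset.card_le_univ M
  have hzero : (0:ℕ) ∈ {k | ∃ M : Finset (Sym2 V), IsMatchingIn G M ∧ M.card = k} :=
    ⟨∅, ⟨by simp, by simp⟩, rfl⟩
  have matchNum_ge : ∀ M : Finset (Sym2 V), IsMatchingIn G M → M.card ≤ matchNum G :=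
    fun M hM => le_csSup hbdd ⟨M, hM, rfl⟩
  obtain ⟨M₀, hM₀, hM₀card⟩ := Nat.sSup_mem ⟨0, hzero⟩ hbdd
  refine ⟨?_, ?_, ?_⟩
  · intro hyes
    -- pair up the false positions within each fiber
    have hpair : ∀ j : Fin q, ∃ Q : Finset (Sym2 (Fin r)),
        (∀ e ∈ Q, ¬ e.IsDiag) ∧
        (∀ e ∈ Q, ∀ ℓ, ℓ ∈ e → h ℓ = j ∧ x ℓ = false) ∧
        (∀ e ∈ Q, ∀ f ∈ Q, e ≠ f → ∀ ℓ, ℓ ∈ e → ℓ ∉ f) ∧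
        2 * Q.card = (Finset.univ.filter (fun ℓ => h ℓ = j ∧ x ℓ = false)).card := by
      intro j
      set S := Finset.univ.filter (fun ℓ => h ℓ = j ∧ x ℓ = false) with hS
      have hsplit : (Finset.univ.filter (fun ℓ => h ℓ = j ∧ x ℓ = true)).card + S.card
          = (Finset.univ.filter (fun ℓ : Fin r => h ℓ = j)).card := by
        rw [hS]
        have e1 : Finset.univ.filter (fun ℓ => h ℓ = j ∧ x ℓ = true)
            = (Finset.univ.filter (fun ℓ : Fin r => h ℓ = j)).filter (fun ℓ => x ℓ = true) := by
          rw [Finset.filter_filter]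
        have e2 : Finset.univ.filter (fun ℓ => h ℓ = j ∧ x ℓ = false)
            = (Finset.univ.filter (fun ℓ : Fin r => h ℓ = j)).filter
                (fun ℓ => ¬ (x ℓ = true)) := by
          rw [Finset.filter_filter]
          apply Finset.filter_congr
          intro ℓ _
          simp [Bool.not_eq_true]
        rw [e1, e2, Finset.card_filter_add_card_filter_not]
      have hev : Even S.card := by
        have h1 := hyes j
        have h2 := hfib j
        have h3 := Nat.even_iff.mp hpeven
        rw [Nat.even_iff]
        omega
      obtain ⟨Q, h1, h2, h3, h4⟩ := exists_pairing S hev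
      refine ⟨Q, h1, ?_, h3, h4⟩
      intro e he ℓ hℓ
      have := h2 e he ℓ hℓ
      rw [hS] at this
      simpa using this
    choose Q hQdiag hQmem hQdisj hQcard using hpair
    set Cp : Finset (Sym2 V) := Finset.univ.biUnion (fun j => (Q j).image (Sym2.map v))
      with hCpdef
    -- characterization of Cp edges
    have hCpForm : ∀ e ∈ Cp, ∃ ℓ ℓ', ℓ ≠ ℓ' ∧ h ℓ = h ℓ' ∧ x ℓ = false ∧ x ℓ' = false ∧
        e = s(v ℓ, v ℓ') := by
      intro e he
      rw [hCpdef] at he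
      obtain ⟨j, -, he⟩ := Finset.mem_biUnion.mp he
      obtain ⟨d, hd, rfl⟩ := Finset.mem_image.mp he
      revert hd
      induction d using Sym2.ind with
      | _ ℓ ℓ' =>
        intro hd
        have hne : ℓ ≠ ℓ' := by
          have := hQdiag j _ hd; simpa [Sym2.isDiag_iff_proj_eq] using this
        have hm1 := hQmem j _ hd ℓ (by simp)
        have hm2 := hQmem j _ hd ℓ' (by simp)
        exact ⟨ℓ, ℓ', hne, by rw [hm1.1, hm2.1], hm1.2, hm2.2, by simp⟩
    -- the combined matching
    set Mtot := P ∪ (Msub jstar ∪ Cp) with hMtotdef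
    -- cross vertex-disjointness
    have hPM : ∀ e ∈ P, ∀ f ∈ Msub jstar ∪ Cp, ∀ w, w ∈ e → w ∉ f := by
      intro e he f hf w hw hwf
      have hwUV : ∃ ℓ, w = u ℓ ∨ w = v ℓ := by
        rcases Finset.mem_union.mp hf with hf | hf
        · obtain ⟨ℓ, -, rfl⟩ := hMstarForm f hf
          rcases Sym2.mem_iff.mp hwf with rfl | rfl
          · exact ⟨ℓ, Or.inl rfl⟩
          · exact ⟨ℓ, Or.inr rfl⟩
        · obtain ⟨ℓ, ℓ', -, -, -, -, rfl⟩ := hCpForm f hf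
          rcases Sym2.mem_iff.mp hwf with rfl | rfl
          · exact ⟨ℓ, Or.inr rfl⟩
          · exact ⟨ℓ', Or.inr rfl⟩
      obtain ⟨ℓ, rfl | rfl⟩ := hwUV
      · rcases hPvert e he _ hw with ⟨hne, -⟩ | hout
        · exact (hne ℓ).1 rfl
        · exact hout (huV₁ ℓ)
      · rcases hPvert e he _ hw with ⟨hne, -⟩ | hout
        · exact (hne ℓ).2 rfl
        · exact hout (hvV₁ ℓ)
    have hMC : ∀ e ∈ Msub jstar, ∀ f ∈ Cp, ∀ w, w ∈ e → w ∉ f := by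
      intro e he f hf w hw hwf
      obtain ⟨ℓ, hxt, rfl⟩ := hMstarForm e he
      obtain ⟨ℓ₁, ℓ₂, -, -, hx1, hx2, rfl⟩ := hCpForm f hf
      rcases Sym2.mem_iff.mp hw with rfl | rfl
      · rcases Sym2.mem_iff.mp hwf with h' | h'
        · exact huv_ne ℓ ℓ₁ h'
        · exact huv_ne ℓ ℓ₂ h'
      · rcases Sym2.mem_iff.mp hwf with h' | h'
        · rw [hv_inj h'] at hxt; simp [hxt] at hx1
        · rw [hv_inj h'] at hxt; simp [hxt] at hx2
    -- internal matching property of Msub jstar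
    have hMstarMatch : ∀ e ∈ Msub jstar, ∀ f ∈ Msub jstar, e ≠ f → ∀ w, w ∈ e → w ∉ f := by
      intro e he f hf hef w hw hwf
      obtain ⟨ℓ, -, rfl⟩ := hMstarForm e he
      obtain ⟨ℓ', -, rfl⟩ := hMstarForm f hf
      have hne : ℓ ≠ ℓ' := by rintro rfl; exact hef rfl
      rcases Sym2.mem_iff.mp hw with rfl | rfl <;> rcases Sym2.mem_iff.mp hwf with h' | h'
      · exact hne (hu_inj h')
      · exact huv_ne ℓ ℓ' h'
      · exact huv_ne ℓ' ℓ h'.symm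
      · exact hne (hv_inj h')
    -- internal matching property of Cp
    have hCpMem : ∀ e ∈ Cp, ∃ j, ∃ d ∈ Q j, e = Sym2.map v d := by
      intro e he
      rw [hCpdef] at he
      obtain ⟨j, -, he⟩ := Finset.mem_biUnion.mp he
      obtain ⟨d, hd, rfl⟩ := Finset.mem_image.mp he
      exact ⟨j, d, hd, rfl⟩
    have hCpMatch : ∀ e ∈ Cp, ∀ f ∈ Cp, e ≠ f → ∀ w, w ∈ e → w ∉ f := by
      intro e he f hf hef w hw hwf
      obtain ⟨j, d, hd, rfl⟩ := hCpMem e he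
      obtain ⟨j', d', hd', rfl⟩ := hCpMem f hf
      obtain ⟨ℓ, hℓd, rfl⟩ := Sym2.mem_map.mp hw
      obtain ⟨ℓ', hℓd', hvv⟩ := Sym2.mem_map.mp hwf
      have hℓd'' : ℓ ∈ d' := by rwa [hv_inj hvv] at hℓd'
      have hj : h ℓ = j := (hQmem j d hd ℓ hℓd).1
      have hj' : h ℓ = j' := (hQmem j' d' hd' ℓ hℓd'').1
      have : j = j' := by rw [← hj, hj']
      subst this
      have hdd : d ≠ d' := by rintro rfl; exact hef rfl
      exact hQdisj j d hd d' hd' hdd ℓ hℓd hℓd''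
    -- Mtot is a matching in G
    have hMtotMatch : IsMatchingIn G Mtot := by
      constructor
      · intro e he
        rw [hGedge]
        rcases Finset.mem_union.mp he with he | he
        · exact Or.inr (Or.inl he)
        · rcases Finset.mem_union.mp he with he | he
          · exact Or.inl ⟨jstar, he⟩
          · refine Or.inr (Or.inr ?_)
            rw [hC]
            obtain ⟨ℓ, ℓ', hne, hh, -, -, rfl⟩ := hCpForm e he
            exact Finset.mem_filter.mpr ⟨Finset.mem_univ _, ℓ, ℓ', hne, hh, rfl⟩
      · intro e he f hf hef w hwe hwf
        rcases Finset.mem_union.mp he with he | he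
        · rcases Finset.mem_union.mp hf with hf | hf
          · exact hPmatch e he f hf hef w hwe hwf
          · exact hPM e he f hf w hwe hwf
        · rcases Finset.mem_union.mp hf with hf | hf
          · -- f ∈ P, e ∈ Msub jstar ∪ Cp
            exact hPM f hf e he w hwf hwe
          · rcases Finset.mem_union.mp he with he | he <;>
              rcases Finset.mem_union.mp hf with hf | hf
            · exact hMstarMatch e he f hf hef w hwe hwf
            · exact hMC e he f hf w hwe hwf
            · exact hMC f hf e he w hwf hwe
            · exact hCpMatch e he f hf hef w hwe hwf
    -- cardinalities
    have hPcard : N₁ - 2 * r ≤ P.card := by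
      rw [← hVoutCard]
      have hwit : ∀ b ∈ (V₁ᶜ : Finset V), ∃ e ∈ P, b ∈ e := by
        intro b hb
        exact hPcoverR b (Finset.mem_compl.mp hb)
      choose f hf1 hf2 using hwit
      apply Finset.card_le_card_of_injOn (fun b => if hb : b ∈ (V₁ᶜ : Finset V) then f b hb else s(b,b))
      · intro b hb
        simp only [Finset.mem_coe] at hb
        simp only [hb, dif_pos]
        exact hf1 b hb
      · intro b₁ hb₁ b₂ hb₂ heq
        simp only [Finset.mem_coe] at hb₁ hb₂
        simp only [hb₁, hb₂, dif_pos] at heq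
        by_contra hne
        obtain ⟨a, c, hac, ha1, -, hc⟩ := hPend _ (hf1 b₁ hb₁)
        have h1 : b₁ ∈ f b₁ hb₁ := hf2 b₁ hb₁
        have h2 : b₂ ∈ f b₁ hb₁ := heq ▸ hf2 b₂ hb₂
        rw [hac] at h1 h2
        have hb₁' := Finset.mem_compl.mp hb₁
        have hb₂' := Finset.mem_compl.mp hb₂
        rcases Sym2.mem_iff.mp h1 with rfl | rfl
        · exact hb₁' ha1
        · rcases Sym2.mem_iff.mp h2 with rfl | h'
          · exact hb₂' ha1
          · exact hne h'.symm
    have hMstarCard : (Msub jstar).card = T.card := by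
      rw [hMstar]
      apply Finset.card_image_of_injOn
      intro ℓ hℓ ℓ' hℓ' heq
      rw [Sym2.eq_iff] at heq
      rcases heq with ⟨h1, -⟩ | ⟨h1, h2⟩
      · exact hu_inj h1
      · exact absurd h1 (huv_ne ℓ ℓ')
    have hmapinj : Function.Injective (Sym2.map v) := Sym2.map.injective hv_inj
    have hQimdisj : ∀ j₁ ∈ (Finset.univ : Finset (Fin q)), ∀ j₂ ∈ (Finset.univ : Finset (Fin q)),
        j₁ ≠ j₂ → Disjoint ((Q j₁).image (Sym2.map v)) ((Q j₂).image (Sym2.map v)) := by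
      intro j₁ _ j₂ _ hjj
      rw [Finset.disjoint_left]
      intro e he₁ he₂
      obtain ⟨d, hd, rfl⟩ := Finset.mem_image.mp he₁
      obtain ⟨d', hd', heq⟩ := Finset.mem_image.mp he₂
      obtain ⟨ℓ₀, hℓ₀⟩ : ∃ ℓ₀, ℓ₀ ∈ d := by
        induction d using Sym2.ind with
        | _ a b => exact ⟨a, by simp⟩
      have hv1 : v ℓ₀ ∈ Sym2.map v d := Sym2.mem_map.mpr ⟨ℓ₀, hℓ₀, rfl⟩
      rw [← heq] at hv1
      obtain ⟨ℓ₁, hℓ₁, hv2⟩ := Sym2.mem_map.mp hv1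
      have hle : ℓ₀ ∈ d' := by rwa [hv_inj hv2] at hℓ₁
      have hj1 : h ℓ₀ = j₂ := (hQmem j₂ d' hd' ℓ₀ hle).1
      have hj0 : h ℓ₀ = j₁ := (hQmem j₁ d hd ℓ₀ hℓ₀).1
      exact hjj (by rw [← hj0, hj1])
    have hCpcard : 2 * Cp.card = r - T.card := by
      have h1 : Cp.card = ∑ j : Fin q, ((Q j).image (Sym2.map v)).card := by
        rw [hCpdef]
        exact Finset.card_biUnion hQimdisj
      have h2 : 2 * Cp.card
          = ∑ j : Fin q, (Finset.univ.filter (fun ℓ => h ℓ = j ∧ x ℓ = false)).card := by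
        rw [h1, Finset.mul_sum]
        exact Finset.sum_congr rfl
          (fun j _ => by rw [Finset.card_image_of_injective _ hmapinj, hQcard])
      have hfiber : ∑ j : Fin q, (Finset.univ.filter (fun ℓ => h ℓ = j ∧ x ℓ = false)).card
          = (Finset.univ.filter (fun ℓ : Fin r => x ℓ = false)).card := by
        rw [Finset.card_eq_sum_card_fiberwise
          (f := h) (t := Finset.univ) (fun ℓ _ => Finset.mem_univ (h ℓ))]
        apply Finset.sum_congr rfl
        intro j _
        congr 1
        ext ℓ
        simp only [Finset.mem_filter, Finset.mem_univ, true_and]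
        tauto
      have hfalse : (Finset.univ.filter (fun ℓ : Fin r => x ℓ = false)).card = r - T.card := by
        have hh := Finset.card_filter_add_card_filter_not
          (s := (Finset.univ : Finset (Fin r))) (p := fun ℓ => x ℓ = true)
        have he : Finset.univ.filter (fun ℓ : Fin r => ¬ (x ℓ = true))
            = Finset.univ.filter (fun ℓ : Fin r => x ℓ = false) := by
          apply Finset.filter_congr; intro ℓ _; simp [Bool.not_eq_true]
        rw [he, Finset.card_univ, Fintype.card_fin] at hh
        rw [hT]
        omega
      rw [h2, hfiber, hfalse]
    have hdisj1 : Disjoint P (Msub jstar ∪ Cp) := by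
      rw [Finset.disjoint_left]
      intro e heP heMC
      obtain ⟨w, hw⟩ : ∃ w, w ∈ e := by
        induction e using Sym2.ind with | _ a b => exact ⟨a, by simp⟩
      exact hPM e heP e heMC w hw hw
    have hdisj2 : Disjoint (Msub jstar) Cp := by
      rw [Finset.disjoint_left]
      intro e he1 he2
      obtain ⟨w, hw⟩ : ∃ w, w ∈ e := by
        induction e using Sym2.ind with | _ a b => exact ⟨a, by simp⟩
      exact hMC e he1 e he2 w hw hw
    have hMtotCard : Mtot.card = P.card + ((Msub jstar).card + Cp.card) := by
      rw [hMtotdef, Finset.card_union_of_disjoint hdisj1, Finset.card_union_of_disjoint hdisj2]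
    have hfinal := matchNum_ge Mtot hMtotMatch
    have hTr : T.card * 2 = r := hx
    omega
  · intro hno
    have hppar : p % 2 = 0 := Nat.even_iff.mp hpeven
    have hbound : ∀ M : Finset (Sym2 V), IsMatchingIn G M →
        4 * M.card + 2 * q ≤ 4 * (N₁ - 2 * r) + 3 * r := by
      intro M hM
      obtain ⟨hMG, hMdisj⟩ := hM
      set Min := M.filter (fun e => ∀ w ∈ e, w ∈ UV) with hMindef
      set Mout := M.filter (fun e => ¬ ∀ w ∈ e, w ∈ UV) with hMoutdef
      have hMsplit : Min.card + Mout.card = M.card :=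
        Finset.card_filter_add_card_filter_not _
      have hMinM : Min ⊆ M := Finset.filter_subset _ _
      have hMoutM : Mout ⊆ M := Finset.filter_subset _ _
      -- Claim A : every edge not inside UV has a vertex in V₁ \ UV
      have hwit : ∀ e ∈ Mout, ∃ w, w ∈ e ∧ w ∈ V₁ \ UV := by
        intro e he
        rw [hMoutdef, Finset.mem_filter] at he
        obtain ⟨heM, hnin⟩ := he
        push_neg at hnin
        obtain ⟨w₀, hw₀e, hw₀⟩ := hnin
        rcases (hGedge e).mp (hMG e heM) with ⟨j, hej⟩ | heP | heC
        · by_cases hj : j = jstar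
          · subst hj
            obtain ⟨ℓ, -, rfl⟩ := hMstarForm e hej
            exfalso
            apply hw₀
            rw [hUVmem]
            rcases Sym2.mem_iff.mp hw₀e with rfl | rfl
            · exact ⟨ℓ, Or.inl rfl⟩
            · exact ⟨ℓ, Or.inr rfl⟩
          · obtain ⟨hall, -, -⟩ := (hMsub j hj).2 e hej
            exact ⟨w₀, hw₀e, Finset.mem_sdiff.mpr ⟨hall w₀ hw₀e, hw₀⟩⟩
        · obtain ⟨a, b, rfl, ha1, ha2, hb⟩ := hPend e heP
          refine ⟨a, by simp, Finset.mem_sdiff.mpr ⟨ha1, ?_⟩⟩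
          rw [hUVmem]
          rintro ⟨ℓ, rfl | rfl⟩
          · exact (ha2 ℓ).1 rfl
          · exact (ha2 ℓ).2 rfl
        · obtain ⟨ℓ, ℓ', -, -, rfl⟩ := hCform e heC
          exfalso
          apply hw₀
          rw [hUVmem]
          rcases Sym2.mem_iff.mp hw₀e with rfl | rfl
          · exact ⟨ℓ, Or.inr rfl⟩
          · exact ⟨ℓ', Or.inr rfl⟩
      choose wf hwf1 hwf2 using hwit
      have hMoutle : Mout.card ≤ N₁ - 2 * r := by
        rw [← hOuterCard]
        apply Finset.card_le_card_of_injOn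
          (fun e => if he : e ∈ Mout then wf e he else (Quot.out e).1)
        · intro e he
          simp only [Finset.mem_coe] at he
          simp only [he, dif_pos]
          exact hwf2 e he
        · intro e₁ he₁ e₂ he₂ heq
          simp only [Finset.mem_coe] at he₁ he₂
          simp only [he₁, he₂, dif_pos] at heq
          by_contra hne
          have h1 : wf e₁ he₁ ∈ e₁ := hwf1 e₁ he₁
          have h2 : wf e₁ he₁ ∈ e₂ := heq ▸ hwf1 e₂ he₂
          exact hMdisj e₁ (hMoutM he₁) e₂ (hMoutM he₂) hne _ h1 h2
      -- Claim B : edges inside UV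
      have hformIn : ∀ e ∈ Min, (∃ ℓ, x ℓ = true ∧ e = s(u ℓ, v ℓ)) ∨
          (∃ ℓ ℓ', ℓ ≠ ℓ' ∧ h ℓ = h ℓ' ∧ e = s(v ℓ, v ℓ')) := by
        intro e he
        rw [hMindef, Finset.mem_filter] at he
        obtain ⟨heM, hin⟩ := he
        rcases (hGedge e).mp (hMG e heM) with ⟨j, hej⟩ | heP | heC
        · by_cases hj : j = jstar
          · subst hj
            exact Or.inl (hMstarForm e hej)
          · obtain ⟨-, -, hnot⟩ := (hMsub j hj).2 e hej
            exfalso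
            apply hnot
            intro w hw
            have := hin w hw
            rwa [hUVmem] at this
        · exfalso
          obtain ⟨a, b, rfl, ha1, ha2, hb⟩ := hPend e heP
          have := hin a (by simp)
          rw [hUVmem] at this
          obtain ⟨ℓ, rfl | rfl⟩ := this
          · exact (ha2 ℓ).1 rfl
          · exact (ha2 ℓ).2 rfl
        · exact Or.inr (hCform e heC)
      set Fsupp : Sym2 V → Finset (Fin r) := fun e => Finset.univ.filter (fun ℓ => v ℓ ∈ e)
        with hFsupp
      have hsuppM : ∀ ℓ : Fin r, Fsupp s(u ℓ, v ℓ) = {ℓ} := by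
        intro ℓ
        ext ℓ'
        simp only [hFsupp, Finset.mem_filter, Finset.mem_univ, true_and,
          Finset.mem_singleton, Sym2.mem_iff]
        constructor
        · rintro (h' | h')
          · exact absurd h'.symm (huv_ne ℓ ℓ')
          · exact hv_inj h'
        · rintro rfl
          exact Or.inr rfl
      have hsuppC : ∀ ℓ ℓ' : Fin r, Fsupp s(v ℓ, v ℓ') = {ℓ, ℓ'} := by
        intro ℓ ℓ'
        ext ℓ₀
        simp only [hFsupp, Finset.mem_filter, Finset.mem_univ, true_and,
          Finset.mem_insert, Finset.mem_singleton, Sym2.mem_iff]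
        constructor
        · rintro (h' | h')
          · exact Or.inl (hv_inj h')
          · exact Or.inr (hv_inj h')
        · rintro (rfl | rfl)
          · exact Or.inl rfl
          · exact Or.inr rfl
      have hfibconst : ∀ e ∈ Min, ∀ ℓ ℓ', v ℓ ∈ e → v ℓ' ∈ e → h ℓ = h ℓ' := by
        intro e he ℓ ℓ' hℓ hℓ'
        rcases hformIn e he with ⟨ℓ₀, -, rfl⟩ | ⟨ℓ₁, ℓ₂, -, hh, rfl⟩
        · have e1 : ℓ = ℓ₀ := by
            rcases Sym2.mem_iff.mp hℓ with h' | h'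
            · exact absurd h'.symm (huv_ne ℓ₀ ℓ)
            · exact hv_inj h'
          have e2 : ℓ' = ℓ₀ := by
            rcases Sym2.mem_iff.mp hℓ' with h' | h'
            · exact absurd h'.symm (huv_ne ℓ₀ ℓ')
            · exact hv_inj h'
          rw [e1, e2]
        · have e1 : h ℓ = h ℓ₁ := by
            rcases Sym2.mem_iff.mp hℓ with h' | h'
            · rw [hv_inj h']
            · rw [hv_inj h', ← hh]
          have e2 : h ℓ' = h ℓ₁ := by
            rcases Sym2.mem_iff.mp hℓ' with h' | h'
            · rw [hv_inj h']
            · rw [hv_inj h', ← hh]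
          rw [e1, e2]
      have hsuppne : ∀ e ∈ Min, ∃ ℓ, v ℓ ∈ e := by
        intro e he
        rcases hformIn e he with ⟨ℓ₀, -, rfl⟩ | ⟨ℓ₁, ℓ₂, -, -, rfl⟩
        · exact ⟨ℓ₀, by simp⟩
        · exact ⟨ℓ₁, by simp⟩
      set Fj : Fin q → Finset (Sym2 V) :=
        fun j => Min.filter (fun e => ∃ ℓ, v ℓ ∈ e ∧ h ℓ = j) with hFj
      have hFjMin : ∀ j, Fj j ⊆ Min := fun j => Finset.filter_subset _ _
      have hcoverB : Min = Finset.univ.biUnion Fj := by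
        ext e
        simp only [Finset.mem_biUnion, Finset.mem_univ, true_and, hFj, Finset.mem_filter]
        constructor
        · intro he
          obtain ⟨ℓ, hℓ⟩ := hsuppne e he
          exact ⟨h ℓ, he, ℓ, hℓ, rfl⟩
        · rintro ⟨j, he, -⟩
          exact he
      have hFdisj : ∀ j₁ ∈ (Finset.univ : Finset (Fin q)), ∀ j₂ ∈ (Finset.univ : Finset (Fin q)),
          j₁ ≠ j₂ → Disjoint (Fj j₁) (Fj j₂) := by
        intro j₁ _ j₂ _ hjj
        rw [Finset.disjoint_left]
        intro e he₁ he₂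
        rw [hFj] at he₁ he₂
        obtain ⟨heM, ℓ, hℓ, hj1⟩ := Finset.mem_filter.mp he₁
        obtain ⟨-, ℓ', hℓ', hj2⟩ := Finset.mem_filter.mp he₂
        exact hjj (by rw [← hj1, ← hj2, hfibconst e heM ℓ ℓ' hℓ hℓ'])
      have hMincard : Min.card = ∑ j : Fin q, (Fj j).card := by
        rw [hcoverB, Finset.card_biUnion hFdisj]
      -- per-fiber bound
      have hperfiber : ∀ j : Fin q, 2 * (Fj j).card + 1 ≤
          p + (Finset.univ.filter (fun ℓ => h ℓ = j ∧ x ℓ = true)).card := by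
        intro j
        set A := (Fj j).filter (fun e => ∃ ℓ, x ℓ = true ∧ e = s(u ℓ, v ℓ)) with hA
        set B := (Fj j).filter (fun e => ¬ ∃ ℓ, x ℓ = true ∧ e = s(u ℓ, v ℓ)) with hB
        have hABcard : A.card + B.card = (Fj j).card :=
          Finset.card_filter_add_card_filter_not _
        -- supports are disjoint
        have hsuppdisj : ∀ e₁ ∈ Fj j, ∀ e₂ ∈ Fj j, e₁ ≠ e₂ →
            Disjoint (Fsupp e₁) (Fsupp e₂) := by
          intro e₁ he₁ e₂ he₂ hne
          rw [Finset.disjoint_left]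
          intro ℓ h₁ h₂
          rw [hFsupp] at h₁ h₂
          simp only [Finset.mem_filter, Finset.mem_univ, true_and] at h₁ h₂
          exact hMdisj e₁ (hMinM (hFjMin j he₁)) e₂ (hMinM (hFjMin j he₂)) hne _ h₁ h₂
        have hsub : (Fj j).biUnion Fsupp ⊆ Finset.univ.filter (fun ℓ => h ℓ = j) := by
          intro ℓ₀ hℓ₀
          obtain ⟨e, he, hℓ₀e⟩ := Finset.mem_biUnion.mp hℓ₀
          rw [hFsupp] at hℓ₀e
          simp only [Finset.mem_filter, Finset.mem_univ, true_and] at hℓ₀e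
          obtain ⟨heMin, ℓ, hℓ, hjℓ⟩ := Finset.mem_filter.mp he
          refine Finset.mem_filter.mpr ⟨Finset.mem_univ _, ?_⟩
          rw [hfibconst e heMin ℓ₀ ℓ hℓ₀e hℓ, hjℓ]
        have hsumle : ∑ e ∈ Fj j, (Fsupp e).card ≤ p := by
          rw [← Finset.card_biUnion hsuppdisj]
          calc ((Fj j).biUnion Fsupp).card
              ≤ (Finset.univ.filter (fun ℓ => h ℓ = j)).card := Finset.card_le_card hsub
            _ = p := hfib j
        have hsuppA : ∀ e ∈ A, (Fsupp e).card = 1 := by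
          intro e he
          obtain ⟨-, ℓ, -, rfl⟩ := Finset.mem_filter.mp he
          rw [hsuppM ℓ, Finset.card_singleton]
        have hsuppB : ∀ e ∈ B, (Fsupp e).card = 2 := by
          intro e he
          obtain ⟨heF, hnot⟩ := Finset.mem_filter.mp he
          rcases hformIn e (hFjMin j heF) with ⟨ℓ, hx1, rfl⟩ | ⟨ℓ₁, ℓ₂, hne, -, rfl⟩
          · exact absurd ⟨ℓ, hx1, rfl⟩ hnot
          · rw [hsuppC ℓ₁ ℓ₂, Finset.card_insert_of_notMem (by simpa using hne),
              Finset.card_singleton]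
        have hsumsplit : A.card + 2 * B.card = ∑ e ∈ Fj j, (Fsupp e).card := by
          rw [← Finset.sum_filter_add_sum_filter_not (Fj j)
            (fun e => ∃ ℓ, x ℓ = true ∧ e = s(u ℓ, v ℓ)) (fun e => (Fsupp e).card),
            ← hA, ← hB]
          congr 1
          · rw [Finset.sum_congr rfl hsuppA]
            simp
          · rw [Finset.sum_congr rfl hsuppB, Finset.sum_const, smul_eq_mul, Nat.mul_comm]
        have hAwit : ∀ e ∈ A, ∃ ℓ, (h ℓ = j ∧ x ℓ = true) ∧ e = s(u ℓ, v ℓ) := by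
          intro e he
          obtain ⟨heF, ℓ, hx1, rfl⟩ := Finset.mem_filter.mp he
          obtain ⟨heMin, ℓ', hℓ', hjℓ'⟩ := Finset.mem_filter.mp heF
          have hjl : h ℓ = j := by
            rw [hfibconst _ heMin ℓ ℓ' (by simp) hℓ', hjℓ']
          exact ⟨ℓ, ⟨hjl, hx1⟩, rfl⟩
        have hAle : A.card ≤ (Finset.univ.filter (fun ℓ => h ℓ = j ∧ x ℓ = true)).card := by
          rcases Finset.eq_empty_or_nonempty A with hAe | ⟨e₀, he₀⟩
          · simp [hAe]
          · choose g hg1 hg2 using hAwit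
            apply Finset.card_le_card_of_injOn
              (fun e => if he : e ∈ A then g e he else g e₀ he₀)
            · intro e he
              simp only [Finset.mem_coe] at he
              simp only [he, dif_pos]
              exact Finset.mem_filter.mpr ⟨Finset.mem_univ _, hg1 e he⟩
            · intro e₁ he₁ e₂ he₂ heq
              simp only [Finset.mem_coe] at he₁ he₂
              simp only [he₁, he₂, dif_pos] at heq
              rw [hg2 e₁ he₁, hg2 e₂ he₂, heq]
        have hodd := hno j
        omega
      have hsum := Finset.sum_le_sum (s := (Finset.univ : Finset (Fin q)))
        (f := fun j => 2 * (Fj j).card + 1)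
        (g := fun j => p + (Finset.univ.filter (fun ℓ => h ℓ = j ∧ x ℓ = true)).card)
        (fun j _ => hperfiber j)
      have hsumT : ∑ j : Fin q, (Finset.univ.filter (fun ℓ => h ℓ = j ∧ x ℓ = true)).card
          = T.card := by
        have hfw := Finset.card_eq_sum_card_fiberwise
          (s := T) (f := h) (t := (Finset.univ : Finset (Fin q)))
          (fun ℓ _ => Finset.mem_univ (h ℓ))
        rw [hfw]
        apply Finset.sum_congr rfl
        intro j _
        congr 1
        ext ℓ
        rw [hT]
        simp only [Finset.mem_filter, Finset.mem_univ, true_and]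
        tauto
      have hL : ∑ j : Fin q, (2 * (Fj j).card + 1) = 2 * Min.card + q := by
        rw [Finset.sum_add_distrib, ← Finset.mul_sum, ← hMincard, Finset.sum_const,
          Finset.card_univ, Fintype.card_fin, smul_eq_mul, mul_one]
      have hR : ∑ j : Fin q, (p + (Finset.univ.filter (fun ℓ => h ℓ = j ∧ x ℓ = true)).card)
          = r + T.card := by
        rw [Finset.sum_add_distrib, hsumT, Finset.sum_const, Finset.card_univ,
          Fintype.card_fin, smul_eq_mul, ← hr]
      have hfin : 2 * Min.card + q ≤ r + T.card := by
        rw [← hL, ← hR]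
        exact hsum
      have hTr : T.card * 2 = r := hx
      omega
    have hb := hbound M₀ hM₀
    have hmn : matchNum G = M₀.card := hM₀card.symm
    rw [hmn]
    have hmul := Nat.mul_le_mul_left p hb
    have e1 : p * (4 * M₀.card + 2 * q) = 4 * p * M₀.card + 2 * r := by rw [hr]; ring
    have e2 : p * (4 * (N₁ - 2 * r) + 3 * r) = 4 * p * (N₁ - 2 * r) + 3 * p * r := by ring
    rw [e1, e2] at hmul
    exact Nat.le_sub_of_add_le hmul
  · -- Part 3: real arithmetic
    intro ε hε hε1 hN₁ hple
    have hp0 : (0:ℝ) < p := by exact_mod_cast hppos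
    have hN0 : (0:ℝ) < N₁ := by exact_mod_cast hN₁
    have hrpos : (0:ℝ) < r := by
      by_contra hcon
      push_neg at hcon
      have hr0 : (r:ℝ) = 0 := le_antisymm hcon (by positivity)
      rw [hr0] at hple
      simp at hple
      nlinarith
    have h2 : (p:ℝ) * (2 * ε) ≤ (r:ℝ) / N₁ := (le_div_iff₀ (by positivity)).mp hple
    have h3 : (p:ℝ) * (2 * ε) * N₁ ≤ r := (le_div_iff₀ hN0).mp h2
    have h1 : ε * (N₁:ℝ) ≤ (r:ℝ) / (2 * p) := by
      rw [le_div_iff₀ (by positivity)]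
      nlinarith
    have hA : ((N₁ - 2 * r : ℕ) : ℝ) = (N₁:ℝ) - 2 * r := by
      push_cast [h2r]; ring
    rw [hA]
    nlinarith [mul_pos hε hrpos, h1]
end

section
/- Let G be a graph on n vertices with maximum matching size opt(G) ≥ C·α for a sufficiently large constant C, and let α ≥ log n. Sample each vertex independently-enough (four-wise independently) with probability p = (log n)/α, and let G_smp be the induced subgraph on sampled vertices. Then with probability 1 − o(1), the maximum matching size of G_smp is at most (3 log n / α)·opt(G). -/
open Finset
open scoped Classical

/-- The maximum size of a matching of `G` all of whose edges have both endpoints in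
the vertex set `A` (i.e. the matching number of the induced subgraph on `A`). -/
noncomputable def matchNumOn {V : Type*} [Fintype V] (G : SimpleGraph V) (A : Set V) : ℕ :=
  sSup {k | ∃ M : Finset (Sym2 V), IsMatchingIn G M ∧
    (∀ e ∈ M, ∀ v : V, v ∈ e → v ∈ A) ∧ M.card = k}

lemma bddAux {V : Type*} [Fintype V] (P : Finset (Sym2 V) → Prop) :
    BddAbove {k | ∃ M, P M ∧ M.card = k} := by
  refine ⟨Fintype.card (Sym2 V), ?_⟩
  rintro k ⟨M, -, rfl⟩
  exact le_trans M.card_le_univ (le_of_eq Finset.card_univ)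

lemma exists_max_matching {V : Type*} [Fintype V] (G : SimpleGraph V) :
    ∃ M : Finset (Sym2 V), IsMatchingIn G M ∧ M.card = matchNum G := by
  have h := Nat.sSup_mem (s := {k | ∃ M : Finset (Sym2 V), IsMatchingIn G M ∧ M.card = k})
    ⟨0, ∅, ⟨by simp [IsMatchingIn], by simp⟩⟩ (bddAux _)
  exact h

lemma exists_max_matchingOn {V : Type*} [Fintype V] (G : SimpleGraph V) (A : Set V) :
    ∃ M : Finset (Sym2 V), IsMatchingIn G M ∧ (∀ e ∈ M, ∀ v : V, v ∈ e → v ∈ A) ∧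
      M.card = matchNumOn G A := by
  have h := Nat.sSup_mem (s := {k | ∃ M : Finset (Sym2 V), IsMatchingIn G M ∧
      (∀ e ∈ M, ∀ v : V, v ∈ e → v ∈ A) ∧ M.card = k})
    ⟨0, ∅, ⟨by simp [IsMatchingIn], by simp, by simp⟩⟩ ?_
  · exact h
  · refine ⟨Fintype.card (Sym2 V), ?_⟩
    rintro k ⟨M, -, -, rfl⟩
    exact le_trans M.card_le_univ (le_of_eq Finset.card_univ)

-- every edge of G touches the vertex set of a maximum matching
lemma touch {V : Type*} [Fintype V] (G : SimpleGraph V) (Mstar : Finset (Sym2 V))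
    (hM1 : IsMatchingIn G Mstar) (hM2 : Mstar.card = matchNum G)
    (e : Sym2 V) (he : e ∈ G.edgeSet) : ∃ v, v ∈ e ∧ ∃ f ∈ Mstar, v ∈ f := by
  by_contra hc
  push_neg at hc
  obtain ⟨a, ha⟩ : ∃ a, a ∈ e := by
    induction e using Sym2.ind with
    | _ a b => exact ⟨a, Sym2.mem_mk_left a b⟩
  have heM : e ∉ Mstar := fun hmem => hc a ha e hmem ha
  have hmatch : IsMatchingIn G (insert e Mstar) := by
    constructor
    · intro f hf
      rcases Finset.mem_insert.1 hf with rfl | hf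
      · exact he
      · exact hM1.1 f hf
    · intro f1 hf1 f2 hf2 hne v hv1 hv2
      rcases Finset.mem_insert.1 hf1 with h1 | h1
      · rcases Finset.mem_insert.1 hf2 with h2 | h2
        · exact hne (h1.trans h2.symm)
        · exact hc v (h1 ▸ hv1) f2 h2 hv2
      · rcases Finset.mem_insert.1 hf2 with h2 | h2
        · exact hc v (h2 ▸ hv2) f1 h1 hv1
        · exact hM1.2 f1 h1 f2 h2 hne v hv1 hv2
  have hcard : (insert e Mstar).card = matchNum G + 1 := by
    rw [Finset.card_insert_of_notMem heM, hM2]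
  have : matchNum G + 1 ≤ matchNum G := by
    have := le_csSup (bddAux (fun M => IsMatchingIn G M))
      (⟨insert e Mstar, hmatch, hcard⟩ : matchNum G + 1 ∈
        {k | ∃ M, IsMatchingIn G M ∧ M.card = k})
    exact this
  omega

lemma matchNumOn_le {V : Type*} [Fintype V] [Nonempty V] (G : SimpleGraph V) (A : Set V)
    (Mstar : Finset (Sym2 V)) (hM1 : IsMatchingIn G Mstar) (hM2 : Mstar.card = matchNum G)
    (VM : Finset V) (hVM : ∀ v, v ∈ VM ↔ ∃ e ∈ Mstar, v ∈ e) :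
    matchNumOn G A ≤ (VM.filter (fun v => v ∈ A)).card := by
  obtain ⟨MA, hMA, hMAsub, hMAcard⟩ := exists_max_matchingOn G A
  rw [← hMAcard]
  have hpick : ∀ e ∈ MA, ∃ v, v ∈ e ∧ v ∈ VM := by
    intro e he
    obtain ⟨v, hv, hf⟩ := touch G Mstar hM1 hM2 e (hMA.1 e he)
    exact ⟨v, hv, (hVM v).2 hf⟩
  set g : Sym2 V → V := fun e =>
    if h : ∃ v, v ∈ e ∧ v ∈ VM then h.choose else Classical.arbitrary V with hg
  have hgspec : ∀ e ∈ MA, g e ∈ e ∧ g e ∈ VM := by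
    intro e he
    have h := hpick e he
    simp only [hg, dif_pos h]
    exact h.choose_spec
  apply Finset.card_le_card_of_injOn g
  · intro e he
    refine Finset.mem_filter.2 ⟨(hgspec e he).2, ?_⟩
    exact hMAsub e he (g e) (hgspec e he).1
  · intro e1 he1 e2 he2 heq
    by_contra hne
    exact hMA.2 e1 he1 e2 he2 hne (g e1) (hgspec e1 he1).1 (heq ▸ (hgspec e2 he2).1)

lemma VM_card_le {V : Type*} [Fintype V] (Mstar : Finset (Sym2 V)) (VM : Finset V)
    (hVM : ∀ v, v ∈ VM ↔ ∃ e ∈ Mstar, v ∈ e) : VM.card ≤ 2 * Mstar.card := by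
  have hsub : VM ⊆ Mstar.biUnion (fun e => Finset.univ.filter (· ∈ e)) := by
    intro v hv
    obtain ⟨e, he, hve⟩ := (hVM v).1 hv
    exact Finset.mem_biUnion.2 ⟨e, he, Finset.mem_filter.2 ⟨Finset.mem_univ v, hve⟩⟩
  refine le_trans (Finset.card_le_card hsub) ?_
  refine le_trans (Finset.card_biUnion_le) ?_
  calc ∑ e ∈ Mstar, (Finset.univ.filter (· ∈ e)).card
      ≤ ∑ _e ∈ Mstar, 2 := by
        refine Finset.sum_le_sum ?_
        intro e _
        induction e using Sym2.ind with
        | _ a b =>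
          refine le_trans (Finset.card_le_card (s := _) (t := {a, b}) ?_) ?_
          · intro v hv
            have := (Finset.mem_filter.1 hv).2
            rw [Sym2.mem_iff] at this
            simpa using this
          · exact le_trans (Finset.card_insert_le a {b}) (by simp)
    _ = 2 * Mstar.card := by rw [Finset.sum_const, smul_eq_mul, mul_comm]


set_option maxHeartbeats 1000000 in
/-- Lemma 8.1, Part 1: there are constants `C₀, C₁ > 0` such that for any graph `G` on
`n ≥ 2` vertices with `opt(G) ≥ C₀·α` and `α ≥ log n`, sampling each vertex four-wise
independently with probability `pr = (log n)/α` yields an induced subgraph whose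
maximum matching size exceeds `(3 log n / α)·opt(G)` with probability at most
`C₁ / log n` (i.e. the bound holds with probability `1 - o(1)`). -/
theorem stmt11 : ∃ C₀ C₁ : ℝ, 0 < C₀ ∧ 0 < C₁ ∧
    ∀ (n : ℕ) (α : ℝ) (G : SimpleGraph (Fin n))
      (S : Type) (_ : Fintype S) (qd : S → ℝ) (Z : S → Fin n → Bool) (pr : ℝ),
      2 ≤ n → Real.log n ≤ α →
      (∀ s, 0 ≤ qd s) → (∑ s, qd s = 1) →
      pr = Real.log n / α →
      (∀ T : Finset (Fin n), T.card ≤ 4 → ∀ f : Fin n → Bool,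
        (∑ s, if ∀ v ∈ T, Z s v = f v then qd s else 0)
          = ∏ v ∈ T, (if f v then pr else 1 - pr)) →
      C₀ * α ≤ (matchNum G : ℝ) →
      (∑ s, if ¬ ((matchNumOn G {v | Z s v = true} : ℝ)
            ≤ 3 * Real.log n / α * (matchNum G : ℝ)) then qd s else 0)
        ≤ C₁ / Real.log n := by
  refine ⟨1, 2, one_pos, two_pos, ?_⟩
  intro n α G S _ qd Z pr hn hα hq0 hq1 hpr hmom hopt
  haveI : Nonempty (Fin n) := ⟨⟨0, by omega⟩⟩
  have hn1 : (1:ℝ) < n := by exact_mod_cast (by omega : 1 < n)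
  have hlog : 0 < Real.log n := Real.log_pos hn1
  have hα0 : 0 < α := lt_of_lt_of_le hlog hα
  have hpr0 : 0 < pr := by rw [hpr]; positivity
  have hpr1 : pr ≤ 1 := by rw [hpr]; exact div_le_one_of_le₀ hα (le_of_lt hα0)
  set opt : ℝ := (matchNum G : ℝ) with hoptdef
  have hoptα : α ≤ opt := by linarith [hopt]
  have hopt0 : 0 < opt := lt_of_lt_of_le hα0 hoptα
  -- maximum matching and its vertex set
  obtain ⟨Mstar, hM1, hM2⟩ := exists_max_matching G
  set VM : Finset (Fin n) := Finset.univ.filter (fun v => ∃ e ∈ Mstar, v ∈ e) with hVMdef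
  set m : ℝ := (VM.card : ℝ) with hmdef
  have hm0 : 0 ≤ m := by positivity
  have hm2opt : m ≤ 2 * opt := by
    have h := VM_card_le Mstar VM (fun v => by simp [hVMdef])
    rw [hM2] at h
    rw [hmdef, hoptdef]
    exact_mod_cast h
  -- the indicator sum
  set X : S → ℝ := fun s => ((VM.filter (fun v => Z s v = true)).card : ℝ) with hXdef
  have hXbound : ∀ s, (matchNumOn G {v | Z s v = true} : ℝ) ≤ X s := by
    intro s
    have h := matchNumOn_le G {v | Z s v = true} Mstar hM1 hM2 VM
      (fun v => by simp [hVMdef])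
    have h2 : (matchNumOn G {v | Z s v = true}) ≤ (VM.filter (fun v => Z s v = true)).card := by
      refine le_trans h (le_of_eq ?_)
      congr 1
      ext v
      simp [Set.mem_setOf_eq]
    show (matchNumOn G {v | Z s v = true} : ℝ) ≤ ((VM.filter (fun v => Z s v = true)).card : ℝ)
    exact_mod_cast h2
  have hXsum : ∀ s, X s = ∑ v ∈ VM, (if Z s v = true then (1:ℝ) else 0) := by
    intro s
    rw [Finset.sum_boole, hXdef]
  -- first moment
  have h1 : ∀ v : Fin n, ∑ s, qd s * (if Z s v = true then (1:ℝ) else 0) = pr := by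
    intro v
    have h := hmom {v} (by simp) (fun _ => true)
    simp only [Finset.mem_singleton, forall_eq, Finset.prod_singleton, if_true] at h
    rw [← h]
    refine Finset.sum_congr rfl fun s _ => ?_
    split_ifs <;> simp
  -- second moment off-diagonal
  have h2 : ∀ u v : Fin n, u ≠ v →
      ∑ s, qd s * ((if Z s u = true then (1:ℝ) else 0) * (if Z s v = true then (1:ℝ) else 0))
        = pr * pr := by
    intro u v huv
    have hcard : ({u, v} : Finset (Fin n)).card ≤ 4 :=
      le_trans (Finset.card_insert_le _ _) (by simp)
    have h := hmom {u, v} hcard (fun _ => true)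
    rw [Finset.prod_pair huv] at h
    simp only [Finset.mem_insert, Finset.mem_singleton, if_true] at h
    rw [← h]
    refine Finset.sum_congr rfl fun s _ => ?_
    by_cases h1' : Z s u = true <;> by_cases h2' : Z s v = true <;>
      simp [h1', h2', forall_eq_or_imp]
  -- expectation of X
  have hEX : ∑ s, qd s * X s = pr * m := by
    simp_rw [hXsum, Finset.mul_sum]
    rw [Finset.sum_comm]
    simp_rw [h1]
    rw [Finset.sum_const, nsmul_eq_mul, hmdef, mul_comm]
  -- expectation of X^2
  have hEX2 : ∑ s, qd s * (X s)^2 = m * pr + m * (m - 1) * pr^2 := by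
    have key : ∀ s, qd s * (X s)^2 =
        ∑ u ∈ VM, ∑ v ∈ VM, qd s * ((if Z s u = true then (1:ℝ) else 0) *
          (if Z s v = true then (1:ℝ) else 0)) := by
      intro s
      rw [hXsum, sq, Finset.sum_mul_sum]
      rw [Finset.mul_sum]
      refine Finset.sum_congr rfl fun u _ => ?_
      rw [Finset.mul_sum]
    simp_rw [key]
    have swap : ∑ s, ∑ u ∈ VM, ∑ v ∈ VM, qd s * ((if Z s u = true then (1:ℝ) else 0) *
        (if Z s v = true then (1:ℝ) else 0)) = ∑ u ∈ VM, ∑ v ∈ VM, ∑ s, qd s *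
        ((if Z s u = true then (1:ℝ) else 0) * (if Z s v = true then (1:ℝ) else 0)) := by
      rw [Finset.sum_comm]
      exact Finset.sum_congr rfl fun u _ => Finset.sum_comm
    rw [swap]
    have inner : ∀ u ∈ VM, (∑ v ∈ VM, ∑ s, qd s * ((if Z s u = true then (1:ℝ) else 0) *
        (if Z s v = true then (1:ℝ) else 0))) = pr + (m - 1) * pr^2 := by
      intro u hu
      rw [← Finset.add_sum_erase VM _ hu]
      have hdiag : ∑ s, qd s * ((if Z s u = true then (1:ℝ) else 0) *
          (if Z s u = true then (1:ℝ) else 0)) = pr := by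
        rw [← h1 u]
        refine Finset.sum_congr rfl fun s _ => ?_
        split_ifs <;> ring
      rw [hdiag]
      congr 1
      have : ∀ v ∈ VM.erase u, (∑ s, qd s * ((if Z s u = true then (1:ℝ) else 0) *
          (if Z s v = true then (1:ℝ) else 0))) = pr * pr := by
        intro v hv
        exact h2 u v (Ne.symm (Finset.ne_of_mem_erase hv))
      rw [Finset.sum_congr rfl this, Finset.sum_const, nsmul_eq_mul,
        Finset.card_erase_of_mem hu]
      have h1le : 1 ≤ VM.card := Finset.card_pos.2 ⟨u, hu⟩
      rw [Nat.cast_sub h1le]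
      push_cast
      rw [hmdef]
      ring
    rw [Finset.sum_congr rfl inner, Finset.sum_const, nsmul_eq_mul, hmdef]
    ring
  -- exchange sum within sum_comm needs inner `∑ v` matching; variance
  set μ : ℝ := pr * m with hμdef
  have hVar : ∑ s, qd s * (X s - μ)^2 = m * pr - m * pr^2 := by
    have expand : ∀ s, qd s * (X s - μ)^2 =
        qd s * (X s)^2 - 2*μ*(qd s * X s) + μ^2 * qd s := fun s => by ring
    simp_rw [expand]
    rw [Finset.sum_add_distrib, Finset.sum_sub_distrib, ← Finset.mul_sum, ← Finset.mul_sum,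
      hEX, hEX2, hq1, hμdef]
    ring
  have hVarle : ∑ s, qd s * (X s - μ)^2 ≤ 2 * opt * pr := by
    rw [hVar]
    nlinarith
  -- Chebyshev
  set t : ℝ := pr * opt with htdef
  have ht0 : 0 < t := by positivity
  have hper : ∀ s, (if ¬ ((matchNumOn G {v | Z s v = true} : ℝ)
        ≤ 3 * Real.log n / α * opt) then qd s else 0) ≤ qd s * (X s - μ)^2 / t^2 := by
    intro s
    by_cases hev : ((matchNumOn G {v | Z s v = true} : ℝ) ≤ 3 * Real.log n / α * opt)
    case neg =>
      rw [if_pos hev]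
      have h3 : 3 * Real.log n / α * opt = 3 * t := by
        rw [htdef, hpr]; ring
      have hXbig : 3 * t < X s := by
        have hb := hXbound s
        by_contra hXle
        push_neg at hXle
        exact hev (by rw [h3]; linarith)
      have hμle : μ ≤ 2 * t := by
        rw [hμdef, htdef]
        nlinarith
      have hdev : t ≤ X s - μ := by linarith
      rw [le_div_iff₀ (by positivity)]
      have h4 : t^2 ≤ (X s - μ)^2 := pow_le_pow_left₀ (le_of_lt ht0) hdev 2
      exact mul_le_mul_of_nonneg_left h4 (hq0 s)
    case pos =>
      rw [if_neg (not_not_intro hev)]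
      exact div_nonneg (mul_nonneg (hq0 s) (sq_nonneg _)) (sq_nonneg _)
  calc (∑ s, if ¬ ((matchNumOn G {v | Z s v = true} : ℝ)
            ≤ 3 * Real.log n / α * opt) then qd s else 0)
      ≤ ∑ s, qd s * (X s - μ)^2 / t^2 := Finset.sum_le_sum fun s _ => hper s
    _ = (∑ s, qd s * (X s - μ)^2) / t^2 := by rw [Finset.sum_div]
    _ ≤ (2 * opt * pr) / t^2 := by
        gcongr
    _ = 2 / t := by
        rw [htdef]
        rw [div_eq_div_iff (by positivity) (by positivity)]
        ring
    _ ≤ 2 / Real.log n := by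
        have hlt : Real.log n ≤ t := by
          rw [htdef]
          calc Real.log n = (Real.log n / α) * α := by field_simp
            _ ≤ pr * opt := by
                rw [hpr]
                exact mul_le_mul_of_nonneg_left hoptα (by positivity)
        gcongr
end

section
/- Let G be a graph on n vertices with maximum matching size opt(G) ≥ C·α² for a sufficiently large constant C, and let α ≥ log n. Sample each vertex with a four-wise independent hash function with probability p = (log n)/α and let G_smp be the induced subgraph on sampled vertices. Then with probability 1 − o(1/log n), the maximum matching size of G_smp is at least (log² n / (2α²))·opt(G). -/
open Finset
open scoped Classical

lemma card_le_matchNumOn {V : Type*} [Fintype V] (G : SimpleGraph V) (A : Set V)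
    (M : Finset (Sym2 V)) (hM : IsMatchingIn G M) (hA : ∀ e ∈ M, ∀ v : V, v ∈ e → v ∈ A) :
    M.card ≤ matchNumOn G A := by
  apply le_csSup
  · exact ⟨Fintype.card (Sym2 V), by rintro k ⟨N, -, -, rfl⟩; exact Finset.card_le_univ N⟩
  · exact ⟨M, hM, hA, rfl⟩

/-- Lemma 8.1, Part 2: there are constants `C₀, C₁ > 0` such that for any graph `G` on
`n ≥ 2` vertices with `opt(G) ≥ C₀·α²` and `α ≥ log n`, sampling each vertex four-wise
independently with probability `pr = (log n)/α` yields an induced subgraph whose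
maximum matching size is below `(log² n / (2α²))·opt(G)` with probability at most
`C₁ / log² n` (i.e. the bound holds with probability `1 - o(1/log n)`). -/
theorem stmt12 : ∃ C₀ C₁ : ℝ, 0 < C₀ ∧ 0 < C₁ ∧
    ∀ (n : ℕ) (α : ℝ) (G : SimpleGraph (Fin n))
      (S : Type) (_ : Fintype S) (qd : S → ℝ) (Z : S → Fin n → Bool) (pr : ℝ),
      2 ≤ n → Real.log n ≤ α →
      (∀ s, 0 ≤ qd s) → (∑ s, qd s = 1) →
      pr = Real.log n / α →
      (∀ T : Finset (Fin n), T.card ≤ 4 → ∀ f : Fin n → Bool,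
        (∑ s, if ∀ v ∈ T, Z s v = f v then qd s else 0)
          = ∏ v ∈ T, (if f v then pr else 1 - pr)) →
      C₀ * α ^ 2 ≤ (matchNum G : ℝ) →
      (∑ s, if (matchNumOn G {v | Z s v = true} : ℝ)
            < (Real.log n) ^ 2 / (2 * α ^ 2) * (matchNum G : ℝ) then qd s else 0)
        ≤ C₁ / (Real.log n) ^ 2 := by
  refine ⟨1, 4, one_pos, by norm_num, ?_⟩
  intro n α G S _ qd Z pr hn hα hq0 hq1 hpr hfour hopt
  set L := Real.log n with hLdef
  have hL : 0 < L := Real.log_pos (by exact_mod_cast (by omega : (1:ℕ) < n))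
  have hαpos : 0 < α := lt_of_lt_of_le hL hα
  have hprpos : 0 < pr := by rw [hpr]; exact div_pos hL hαpos
  have hpr2 : pr ^ 2 = L ^ 2 / α ^ 2 := by rw [hpr, div_pow]
  obtain ⟨M, hM, hMcard⟩ := exists_max_matching G
  set m : ℝ := (matchNum G : ℝ) with hmdef
  have hm : α ^ 2 ≤ m := by linarith
  have hm0 : 0 < m := lt_of_lt_of_le (by positivity) hm
  -- vertex sets of edges
  set Tset : Sym2 (Fin n) → Finset (Fin n) :=
    fun e => Finset.univ.filter (fun v => v ∈ e) with hTdef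
  have hTmem : ∀ (e : Sym2 (Fin n)) (v : Fin n), v ∈ Tset e ↔ v ∈ e := by
    intro e v; simp [hTdef]
  have hTcard : ∀ e ∈ M, (Tset e).card = 2 := by
    intro e he
    induction e using Sym2.ind with
    | _ a b =>
      have hadj : G.Adj a b := (SimpleGraph.mem_edgeSet G).mp (hM.1 _ he)
      have hset : Tset s(a, b) = {a, b} := by
        ext v; simp [hTdef, Sym2.mem_iff]
      rw [hset, Finset.card_pair hadj.ne]
  have hTdisj : ∀ e ∈ M, ∀ f ∈ M, e ≠ f → Disjoint (Tset e) (Tset f) := by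
    intro e he f hf hef
    rw [Finset.disjoint_left]
    intro v hv hv'
    exact hM.2 e he f hf hef v ((hTmem e v).mp hv) ((hTmem f v).mp hv')
  -- indicator of both endpoints sampled
  set ind : Sym2 (Fin n) → S → ℝ :=
    fun e s => if ∀ v ∈ Tset e, Z s v = true then 1 else 0 with hinddef
  have hind01 : ∀ e s, ind e s = 0 ∨ ind e s = 1 := by
    intro e s
    simp only [hinddef]
    split_ifs
    exacts [Or.inr rfl, Or.inl rfl]
  -- first moment of one indicator
  have E1 : ∀ e ∈ M, ∑ s, qd s * ind e s = pr ^ 2 := by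
    intro e he
    have h4 := hfour (Tset e) (by rw [hTcard e he]; norm_num) (fun _ => true)
    simp only [if_true, Finset.prod_const] at h4
    rw [hTcard e he] at h4
    calc ∑ s, qd s * ind e s
        = ∑ s, if ∀ v ∈ Tset e, Z s v = true then qd s else 0 := by
          apply Finset.sum_congr rfl; intro s _
          simp only [hinddef, mul_ite, mul_one, mul_zero]
      _ = pr ^ 2 := h4
  -- cross moments
  have E2 : ∀ e ∈ M, ∀ f ∈ M, e ≠ f → ∑ s, qd s * (ind e s * ind f s) = pr ^ 4 := by
    intro e he f hf hef
    have hdisj := hTdisj e he f hf hef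
    have hcard : (Tset e ∪ Tset f).card = 4 := by
      rw [Finset.card_union_of_disjoint hdisj, hTcard e he, hTcard f hf]
    have h4 := hfour (Tset e ∪ Tset f) (by rw [hcard]) (fun _ => true)
    simp only [if_true, Finset.prod_const] at h4
    rw [hcard] at h4
    calc ∑ s, qd s * (ind e s * ind f s)
        = ∑ s, if (∀ v ∈ Tset e, Z s v = true) ∧ (∀ v ∈ Tset f, Z s v = true)
            then qd s else 0 := by
          apply Finset.sum_congr rfl; intro s _
          simp only [hinddef]
          by_cases h1 : ∀ v ∈ Tset e, Z s v = true <;>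
            by_cases h2 : ∀ v ∈ Tset f, Z s v = true
          · rw [if_pos h1, if_pos h2, if_pos ⟨h1, h2⟩]; ring
          · rw [if_pos h1, if_neg h2, if_neg (fun h => h2 h.2)]; ring
          · rw [if_neg h1, if_pos h2, if_neg (fun h => h1 h.1)]; ring
          · rw [if_neg h1, if_neg h2, if_neg (fun h => h1 h.1)]; ring
      _ = ∑ s, if ∀ v ∈ Tset e ∪ Tset f, Z s v = true then qd s else 0 := by
          apply Finset.sum_congr rfl; intro s _
          exact if_congr (Finset.forall_mem_union).symm rfl rfl
      _ = pr ^ 4 := h4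
  -- the counting random variable
  set Xs : S → ℝ := fun s => ∑ e ∈ M, ind e s with hXdef
  have EX : ∑ s, qd s * Xs s = m * pr ^ 2 := by
    calc ∑ s, qd s * Xs s = ∑ s, ∑ e ∈ M, qd s * ind e s := by
          apply Finset.sum_congr rfl; intro s _
          simp only [hXdef]; rw [Finset.mul_sum]
      _ = ∑ e ∈ M, ∑ s, qd s * ind e s := Finset.sum_comm
      _ = ∑ e ∈ M, pr ^ 2 := Finset.sum_congr rfl (fun e he => E1 e he)
      _ = m * pr ^ 2 := by rw [Finset.sum_const, nsmul_eq_mul, hMcard]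
  have EX2 : ∑ s, qd s * Xs s ^ 2 = m * (m * pr ^ 4 + (pr ^ 2 - pr ^ 4)) := by
    calc ∑ s, qd s * Xs s ^ 2
        = ∑ s, ∑ e ∈ M, ∑ f ∈ M, qd s * (ind e s * ind f s) := by
          apply Finset.sum_congr rfl; intro s _
          simp only [hXdef]
          rw [sq, Finset.sum_mul_sum]
          rw [Finset.mul_sum]
          apply Finset.sum_congr rfl; intro e _
          rw [Finset.mul_sum]
      _ = ∑ e ∈ M, ∑ f ∈ M, ∑ s, qd s * (ind e s * ind f s) := by
          rw [Finset.sum_comm]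
          apply Finset.sum_congr rfl; intro e _
          rw [Finset.sum_comm]
      _ = ∑ e ∈ M, ∑ f ∈ M, (if e = f then pr ^ 2 else pr ^ 4) := by
          apply Finset.sum_congr rfl; intro e he
          apply Finset.sum_congr rfl; intro f hf
          by_cases hef : e = f
          · subst hef
            rw [if_pos rfl]
            calc ∑ s, qd s * (ind e s * ind e s)
                = ∑ s, qd s * ind e s := by
                  apply Finset.sum_congr rfl; intro s _
                  rcases hind01 e s with h | h <;> rw [h] <;> ring
              _ = pr ^ 2 := E1 e he
          · rw [if_neg hef]; exact E2 e he f hf hef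
      _ = ∑ _e ∈ M, ((M.card : ℝ) * pr ^ 4 + (pr ^ 2 - pr ^ 4)) := by
          apply Finset.sum_congr rfl; intro e he
          have hsplit : ∀ f ∈ M, (if e = f then pr ^ 2 else pr ^ 4)
              = pr ^ 4 + (if e = f then pr ^ 2 - pr ^ 4 else 0) := by
            intro f _; by_cases h : e = f <;> simp [h]
          rw [Finset.sum_congr rfl hsplit, Finset.sum_add_distrib, Finset.sum_const,
            Finset.sum_ite_eq, if_pos he, nsmul_eq_mul]
      _ = m * (m * pr ^ 4 + (pr ^ 2 - pr ^ 4)) := by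
          rw [Finset.sum_const, nsmul_eq_mul, hMcard]
  -- variance bound
  have hVar : ∑ s, qd s * (Xs s - m * pr ^ 2) ^ 2 ≤ m * pr ^ 2 := by
    have hexp : ∑ s, qd s * (Xs s - m * pr ^ 2) ^ 2
        = (∑ s, qd s * Xs s ^ 2) - 2 * (m * pr ^ 2) * (∑ s, qd s * Xs s)
          + (m * pr ^ 2) ^ 2 * (∑ s, qd s) := by
      rw [Finset.mul_sum, Finset.mul_sum, ← Finset.sum_sub_distrib, ← Finset.sum_add_distrib]
      apply Finset.sum_congr rfl; intro s _; ring
    rw [hexp, EX, EX2, hq1]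
    have hpr4 : (0:ℝ) ≤ m * pr ^ 4 := by positivity
    nlinarith
  -- surviving edges lower-bound matchNumOn
  have hXle : ∀ s, Xs s ≤ (matchNumOn G {v | Z s v = true} : ℝ) := by
    intro s
    have hXcard : Xs s = (((M.filter (fun e => ∀ v ∈ Tset e, Z s v = true)).card : ℕ) : ℝ) := by
      simp only [hXdef, hinddef]
      rw [Finset.sum_boole]
    rw [hXcard]
    have hle : (M.filter (fun e => ∀ v ∈ Tset e, Z s v = true)).card
        ≤ matchNumOn G {v | Z s v = true} := by
      apply card_le_matchNumOn
      · constructor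
        · intro e he; exact hM.1 e (Finset.mem_of_mem_filter e he)
        · intro e he f hf hef
          exact hM.2 e (Finset.mem_of_mem_filter e he) f (Finset.mem_of_mem_filter f hf) hef
      · intro e he v hv
        have := (Finset.mem_filter.mp he).2 v ((hTmem e v).mpr hv)
        exact this
    exact_mod_cast hle
  -- Chebyshev and conclusion
  have hhalf : L ^ 2 / (2 * α ^ 2) * m = m * pr ^ 2 / 2 := by
    rw [hpr2]; field_simp
  have hc0 : 0 < m * pr ^ 2 := by positivity
  have hcheb : (∑ s, if (matchNumOn G {v | Z s v = true} : ℝ)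
      < L ^ 2 / (2 * α ^ 2) * m then qd s else 0) * (m * pr ^ 2 / 2) ^ 2
      ≤ m * pr ^ 2 := by
    calc (∑ s, if (matchNumOn G {v | Z s v = true} : ℝ)
          < L ^ 2 / (2 * α ^ 2) * m then qd s else 0) * (m * pr ^ 2 / 2) ^ 2
        = ∑ s, (if (matchNumOn G {v | Z s v = true} : ℝ)
            < L ^ 2 / (2 * α ^ 2) * m then qd s else 0) * (m * pr ^ 2 / 2) ^ 2 := by
          rw [Finset.sum_mul]
      _ ≤ ∑ s, qd s * (Xs s - m * pr ^ 2) ^ 2 := by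
          apply Finset.sum_le_sum
          intro s _
          by_cases hev : (matchNumOn G {v | Z s v = true} : ℝ) < L ^ 2 / (2 * α ^ 2) * m
          · rw [if_pos hev]
            have hx : Xs s < m * pr ^ 2 / 2 := by
              calc Xs s ≤ _ := hXle s
                _ < L ^ 2 / (2 * α ^ 2) * m := hev
                _ = m * pr ^ 2 / 2 := hhalf
            have hsq : (m * pr ^ 2 / 2) ^ 2 ≤ (Xs s - m * pr ^ 2) ^ 2 := by nlinarith
            exact mul_le_mul_of_nonneg_left hsq (hq0 s)
          · rw [if_neg hev, zero_mul]
            exact mul_nonneg (hq0 s) (sq_nonneg _)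
      _ ≤ m * pr ^ 2 := hVar
  have hfinal : (∑ s, if (matchNumOn G {v | Z s v = true} : ℝ)
      < L ^ 2 / (2 * α ^ 2) * m then qd s else 0) ≤ 4 / (m * pr ^ 2) := by
    have h2 : (0:ℝ) < (m * pr ^ 2 / 2) ^ 2 := by positivity
    rw [← le_div_iff₀ h2] at hcheb
    calc (∑ s, if (matchNumOn G {v | Z s v = true} : ℝ)
          < L ^ 2 / (2 * α ^ 2) * m then qd s else 0)
        ≤ m * pr ^ 2 / (m * pr ^ 2 / 2) ^ 2 := hcheb
      _ = 4 / (m * pr ^ 2) := by field_simp; ring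
  have hmpr : L ^ 2 ≤ m * pr ^ 2 := by
    rw [hpr2]
    calc L ^ 2 = α ^ 2 * (L ^ 2 / α ^ 2) := by field_simp
      _ ≤ m * (L ^ 2 / α ^ 2) := by
          apply mul_le_mul_of_nonneg_right hm (by positivity)
  calc (∑ s, if (matchNumOn G {v | Z s v = true} : ℝ)
        < L ^ 2 / (2 * α ^ 2) * m then qd s else 0)
      ≤ 4 / (m * pr ^ 2) := hfinal
    _ ≤ 4 / L ^ 2 := by
        apply div_le_div_of_nonneg_left (by norm_num) (by positivity) hmpr
end
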